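/- arXiv:2008.03076 — 3 statements merged into one kernel-verified Lean document; each statement's English description precedes it below -/
import Mathlib

section
/- For every t ≥ 0, the entropy H_n(t) = H_n(f_t) is differentiable in t and satisfies H'_n(t) ≤ −2 n² I_n(f_t) + a_n ∫ V f_t dν^n_ρ, where V(η) = 2 Σ_{j=1}^d Σ_{x∈T^d_n} ω_x ω_{x+e_j}. -/
open Finset

/-- The discrete torus `(ℤ/nℤ)^d`. -/
abbrev Torus (d n : ℕ) := Fin d → ZMod n

/-- Particle configurations on the discrete torus. -/
abbrev Cfg (d n : ℕ) := Torus d n → Bool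

/-- Particle configurations on `ℤ^d`. -/
abbrev ZCfg (d : ℕ) := (Fin d → ℤ) → Bool

/-- Real (0/1) value of a configuration at a site. -/
noncomputable def cval {d n : ℕ} (η : Cfg d n) (x : Torus d n) : ℝ :=
  if η x then 1 else 0

/-- Real (0/1) value of a `ℤ^d` configuration at a site. -/
noncomputable def zval {d : ℕ} (η : ZCfg d) (z : Fin d → ℤ) : ℝ :=
  if η z then 1 else 0

/-- The Bernoulli(ρ) product weight of a configuration. -/
noncomputable def bern (d n : ℕ) [NeZero n] (ρ : ℝ) (η : Cfg d n) : ℝ :=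
  ∏ x : Torus d n, (if η x then ρ else 1 - ρ)

/-- Expectation with respect to the Bernoulli(ρ) product measure `ν^n_ρ`. -/
noncomputable def expect (d n : ℕ) [NeZero n] (ρ : ℝ) (f : Cfg d n → ℝ) : ℝ :=
  ∑ η : Cfg d n, bern d n ρ η * f η

/-- A density with respect to `ν^n_ρ`. -/
def IsDensity (d n : ℕ) [NeZero n] (ρ : ℝ) (f : Cfg d n → ℝ) : Prop :=
  (∀ η, 0 ≤ f η) ∧ expect d n ρ f = 1

/-- Relative entropy `H_n(f) = ∫ f log f dν^n_ρ`. -/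
noncomputable def entropy (d n : ℕ) [NeZero n] (ρ : ℝ) (f : Cfg d n → ℝ) : ℝ :=
  expect d n ρ (fun η => f η * Real.log (f η))

/-- Sup norm of a function on the discrete torus. -/
noncomputable def supNorm {d n : ℕ} [NeZero n] (F : Torus d n → ℝ) : ℝ :=
  ⨆ x : Torus d n, |F x|

/-- The canonical unit vector `e_j` of the torus. -/
def unitT (d n : ℕ) (j : Fin d) : Torus d n := fun i => if i = j then 1 else 0

/-- The canonical unit vector `e_j` of `ℤ^d`. -/
def unitZ (d : ℕ) (j : Fin d) : Fin d → ℤ := fun i => if i = j then 1 else 0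

/-- `σ^x η` : flip the value of the configuration at `x`. -/
def flipCfg {d n : ℕ} (x : Torus d n) (η : Cfg d n) : Cfg d n :=
  Function.update η x (!η x)

/-- `σ^{x,y} η` : exchange the values of the configuration at `x` and `y`. -/
def swapCfg {d n : ℕ} (x y : Torus d n) (η : Cfg d n) : Cfg d n :=
  fun z => if z = x then η y else if z = y then η x else η z

/-- `τ_x η` : translation of a torus configuration. -/
def shiftCfg {d n : ℕ} (x : Torus d n) (η : Cfg d n) : Cfg d n := fun z => η (x + z)

/-- Canonical projection `ℤ^d → (ℤ/nℤ)^d`. -/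
def toTorus {d n : ℕ} (z : Fin d → ℤ) : Torus d n := fun i => ((z i : ℤ) : ZMod n)

/-- Periodic identification of a torus configuration with a `ℤ^d` configuration. -/
def liftCfg {d n : ℕ} (η : Cfg d n) : ZCfg d := fun z => η (toTorus z)

/-- `τ_y η` : translation of a `ℤ^d` configuration. -/
def zshift {d : ℕ} (y : Fin d → ℤ) (η : ZCfg d) : ZCfg d := fun z => η (y + z)

/-- flip the value of a `ℤ^d` configuration at `z`. -/
def zflip {d : ℕ} (z : Fin d → ℤ) (η : ZCfg d) : ZCfg d :=
  Function.update η z (!η z)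

/-- A cylinder function on `{0,1}^{ℤ^d}` : a function depending only on the
(finitely many) coordinates in `supp`. -/
structure CylFun (d : ℕ) where
  supp : Finset (Fin d → ℤ)
  toFun : ZCfg d → ℝ
  cyl : ∀ η ζ : ZCfg d, (∀ z ∈ supp, η z = ζ z) → toFun η = toFun ζ

/-- `~h(ρ)` : expectation of a cylinder function under the Bernoulli(ρ) product
measure on `{0,1}^{ℤ^d}` (computed over its support). -/
noncomputable def CylFun.tilde {d : ℕ} (h : CylFun d) (ρ : ℝ) : ℝ :=
  ∑ σ : {z // z ∈ h.supp} → Bool,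
    (∏ z : {z // z ∈ h.supp}, if σ z then ρ else 1 - ρ) *
      h.toFun (fun z => if hz : z ∈ h.supp then σ ⟨z, hz⟩ else false)

/-- `S` is contained in a cube of side `n` (so that periodic identification on the
torus of side `n` is faithful on `S`). -/
def FitsCube (d : ℕ) (S : Finset (Fin d → ℤ)) (n : ℕ) : Prop :=
  ∃ a : Fin d → ℤ, ∀ z ∈ S, ∀ i, a i ≤ z i ∧ z i < a i + (n : ℤ)

/-- `c(τ_x η)` : a cylinder function evaluated on the translate of a torus
configuration, via periodic identification. -/
noncomputable def cylAt {d n : ℕ} (c : CylFun d) (x : Torus d n) (η : Cfg d n) : ℝ :=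
  c.toFun (liftCfg (shiftCfg x η))

/-- The speed-change exclusion generator `L^S_n`. -/
noncomputable def genS (d n : ℕ) [NeZero n] (c : Fin d → CylFun d)
    (h : Cfg d n → ℝ) (η : Cfg d n) : ℝ :=
  ∑ x : Torus d n, ∑ j : Fin d,
    cylAt (c j) x η * (h (swapCfg x (x + unitT d n j) η) - h η)

/-- The voter generator `L^V_n` (the sum over the neighbours `y` of `x` being the
sum over `y = x ± e_j`, `1 ≤ j ≤ d`). -/
noncomputable def genV (d n : ℕ) [NeZero n] (h : Cfg d n → ℝ) (η : Cfg d n) : ℝ :=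
  ∑ x : Torus d n, ∑ j : Fin d,
    ((cval η (x + unitT d n j) - cval η x) ^ 2 * (h (flipCfg x η) - h η)
      + (cval η (x - unitT d n j) - cval η x) ^ 2 * (h (flipCfg x η) - h η))

/-- The adjoint in `L²(ν^n_ρ)` of a linear operator on functions on `Ω_n`. -/
noncomputable def adjoint (d n : ℕ) [NeZero n] (ρ : ℝ)
    (L : (Cfg d n → ℝ) → Cfg d n → ℝ) (g : Cfg d n → ℝ) (η : Cfg d n) : ℝ :=
  (∑ ζ : Cfg d n, bern d n ρ ζ * g ζ * L (fun ξ => if ξ = η then 1 else 0) ζ)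
    / bern d n ρ η

/-- The Dirichlet form `I_n(f)`. -/
noncomputable def dirichlet (d n : ℕ) [NeZero n] (ρ : ℝ) (c : Fin d → CylFun d)
    (f : Cfg d n → ℝ) : ℝ :=
  (1 / 2) * ∑ j : Fin d, ∑ x : Torus d n,
    expect d n ρ (fun η =>
      cylAt (c j) x η *
        (Real.sqrt (f (swapCfg x (x + unitT d n j) η)) - Real.sqrt (f η)) ^ 2)

/-- The sequence `R_d(n)`. -/
noncomputable def Rd (d n : ℕ) (a : ℝ) : ℝ :=
  if d = 1 then Real.sqrt a
  else if d = 2 then a * Real.log (n : ℝ)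
  else a * (n : ℝ) ^ (d - 2)

/-- The sequence `g_d(ℓ)`. -/
noncomputable def gd (d ℓ : ℕ) : ℝ :=
  if d = 1 then (ℓ : ℝ) else if d = 2 then Real.log (ℓ : ℝ) else 1

/-- `ω_x = (η_x - ρ)/√(ρ(1-ρ))`. -/
noncomputable def omega (d n : ℕ) [NeZero n] (ρ : ℝ) (η : Cfg d n) (x : Torus d n) : ℝ :=
  (cval η x - ρ) / Real.sqrt (ρ * (1 - ρ))

/-- `ω_{x+B} = ∏_{z ∈ B} ω_{x+z}`. -/
noncomputable def omegaProd (d n : ℕ) [NeZero n] (ρ : ℝ) (B : Finset (Fin d → ℤ))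
    (η : Cfg d n) (x : Torus d n) : ℝ :=
  ∏ z ∈ B, omega d n ρ η (x + toTorus z)

/-- `V(η) = 2 Σ_j Σ_x ω_x ω_{x+e_j}`. -/
noncomputable def Vfun (d n : ℕ) [NeZero n] (ρ : ℝ) (η : Cfg d n) : ℝ :=
  2 * ∑ j : Fin d, ∑ x : Torus d n, omega d n ρ η x * omega d n ρ η (x + unitT d n j)

/-- The cube `Λ_ℓ = {0,…,ℓ-1}^d ⊂ ℤ^d`. -/
noncomputable def box (d ℓ : ℕ) : Finset (Fin d → ℤ) :=
  Fintype.piFinset fun _ => Finset.Ico (0 : ℤ) (ℓ : ℤ)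

/-- The uniform measure `m_ℓ` on `Λ_ℓ`. -/
noncomputable def mker (d ℓ : ℕ) (z : Fin d → ℤ) : ℝ :=
  if z ∈ box d ℓ then ((ℓ : ℝ) ^ d)⁻¹ else 0

/-- The convolution `m^{(2)}_ℓ = m_ℓ ∗ m_ℓ`. -/
noncomputable def m2ker (d ℓ : ℕ) (z : Fin d → ℤ) : ℝ :=
  ∑ y ∈ box d ℓ, mker d ℓ y * mker d ℓ (z - y)

/-- `ω^ℓ_x = Σ_y m^{(2)}_ℓ(y) ω_{x+y}`. -/
noncomputable def omegaL (d n : ℕ) [NeZero n] (ρ : ℝ) (ℓ : ℕ) (η : Cfg d n)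
    (x : Torus d n) : ℝ :=
  ∑ y ∈ box d (2 * ℓ - 1), m2ker d ℓ y * omega d n ρ η (x + toTorus y)

/-- `V_ℓ(η) = 2 Σ_j Σ_x ω_x ω^ℓ_{x+e_j}`. -/
noncomputable def VfunL (d n : ℕ) [NeZero n] (ρ : ℝ) (ℓ : ℕ) (η : Cfg d n) : ℝ :=
  2 * ∑ j : Fin d, ∑ x : Torus d n, omega d n ρ η x * omegaL d n ρ ℓ η (x + unitT d n j)

/-- The ℓ¹ norm on `ℤ^d`. -/
def norm1 {d : ℕ} (z : Fin d → ℤ) : ℤ := ∑ i, |z i|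

/-- `xA` is a maximal element of `A` for the coordinatewise partial order. -/
def IsMaximalIn {d : ℕ} (A : Finset (Fin d → ℤ)) (xA : Fin d → ℤ) : Prop :=
  xA ∈ A ∧ ∀ y ∈ A, (∀ i, xA i ≤ y i) → y = xA

/-- `H^{(ℓ)}_{k,x}` built from a flow `Φ`. -/
noncomputable def Hflow (d n : ℕ) [NeZero n] (ρ : ℝ) (ℓ : ℕ)
    (Φ : (Fin d → ℤ) → (Fin d → ℤ) → ℝ) (A : Finset (Fin d → ℤ)) (xA : Fin d → ℤ)
    (G : Torus d n → ℝ) (k : Fin d) (x : Torus d n) (η : Cfg d n) : ℝ :=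
  ∑ y ∈ (box d (2 * ℓ - 1)).filter (fun y => y + unitZ d k ∈ box d (2 * ℓ - 1)),
    Φ y (y + unitZ d k) * G (x - toTorus xA - toTorus y) *
      omegaProd d n ρ (A.erase xA) η (x - toTorus xA - toTorus y)

section Aux
variable {d n : ℕ} [NeZero n] {ρ : ℝ}

lemma bern_pos (hρ0 : 0 < ρ) (hρ1 : ρ < 1) (η : Cfg d n) : 0 < bern d n ρ η := by
  unfold bern
  exact Finset.prod_pos fun x _ => by split <;> linarith

lemma swapCfg_invol (x y : Torus d n) : Function.Involutive (swapCfg x y (d := d) (n := n)) := by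
  intro η
  funext z
  simp only [swapCfg]
  split_ifs <;> simp_all

lemma flipCfg_invol (x : Torus d n) : Function.Involutive (flipCfg x (d := d) (n := n)) := by
  intro η
  funext z
  by_cases hz : z = x
  · subst hz; simp [flipCfg]
  · simp [flipCfg, Function.update_of_ne hz]

lemma sum_comp_invol {g : Cfg d n → Cfg d n} (hg : Function.Involutive g) (F : Cfg d n → ℝ) :
    ∑ η : Cfg d n, F (g η) = ∑ η : Cfg d n, F η :=
  Fintype.sum_bijective g hg.bijective _ _ (fun _ => rfl)

lemma bern_swap (x y : Torus d n) (η : Cfg d n) :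
    bern d n ρ (swapCfg x y η) = bern d n ρ η := by
  unfold bern
  have : ∀ z, swapCfg x y η z = η (Equiv.swap x y z) := by
    intro z
    simp only [swapCfg, Equiv.swap_apply_def]
    split_ifs <;> rfl
  rw [Finset.prod_congr rfl fun z _ => by rw [this]]
  exact Fintype.prod_equiv (Equiv.swap x y) _ _ (fun z => rfl)

lemma bern_flip (hρ0 : 0 < ρ) (hρ1 : ρ < 1) (x : Torus d n) (η : Cfg d n) :
    bern d n ρ (flipCfg x η) = bern d n ρ η * (if η x then (1 - ρ)/ρ else ρ/(1 - ρ)) := by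
  unfold bern
  have key : (fun z => if flipCfg x η z then ρ else 1 - ρ) =
      Function.update (fun z => if η z then ρ else 1 - ρ) x (if η x then 1 - ρ else ρ) := by
    funext z
    by_cases hz : z = x
    · subst hz; simp [flipCfg, Function.update_self]; cases η z <;> simp
    · simp [flipCfg, Function.update_of_ne hz]
  rw [show ∏ z, (if flipCfg x η z then ρ else 1 - ρ) = ∏ z, Function.update (fun z => if η z then ρ else 1 - ρ) x (if η x then 1 - ρ else ρ) z from by rw [key]]
  rw [Finset.prod_update_of_mem (Finset.mem_univ x)]
  rw [← Finset.prod_erase_mul Finset.univ _ (Finset.mem_univ x)]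
  have h1 : ρ ≠ 0 := ne_of_gt hρ0
  have h2 : (1:ℝ) - ρ ≠ 0 := by linarith
  rw [Finset.sdiff_singleton_eq_erase]
  cases hx : η x <;> simp [hx] <;> field_simp <;> ring

end Aux
section Aux2
set_option linter.unusedSectionVars false
variable {d n : ℕ} [NeZero n]

lemma toTorus_inj_cube {aa z w : Fin d → ℤ}
    (hz : ∀ i, aa i ≤ z i ∧ z i < aa i + (n:ℤ)) (hw : ∀ i, aa i ≤ w i ∧ w i < aa i + (n:ℤ))
    (h : (toTorus z : Torus d n) = toTorus w) : z = w := by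
  funext i
  have hc : ((z i : ZMod n) = (w i : ZMod n)) := congrFun h i
  have hdvd : (n:ℤ) ∣ w i - z i := by
    rw [ZMod.intCast_eq_intCast_iff] at hc; exact Int.ModEq.dvd hc
  have hn : 0 < (n:ℤ) := by exact_mod_cast Nat.pos_of_ne_zero (NeZero.ne n)
  have habs : |w i - z i| < (n:ℤ) := by
    obtain ⟨h1, h2⟩ := hz i
    obtain ⟨h3, h4⟩ := hw i
    rw [abs_lt]; constructor <;> linarith
  have := Int.eq_zero_of_abs_lt_dvd hdvd habs
  linarith

lemma unitZ_ne_zero (j : Fin d) : unitZ d j ≠ 0 := by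
  intro h
  have := congrFun h j
  simp [unitZ] at this

lemma toTorus_unitZ (j : Fin d) : (toTorus (unitZ d j) : Torus d n) = unitT d n j := by
  funext i
  simp only [toTorus, unitZ, unitT]
  split_ifs <;> simp

lemma toTorus_zero : (toTorus (0 : Fin d → ℤ) : Torus d n) = 0 := by
  funext i; simp [toTorus]

lemma cyl_indep (C : CylFun d) (e : Fin d → ℤ)
    (h0 : ∀ η, C.toFun (zflip 0 η) = C.toFun η)
    (he : ∀ η, C.toFun (zflip e η) = C.toFun η)
    (he0 : e ≠ 0) (η ζ : ZCfg d)
    (hagree : ∀ z ∈ C.supp, z ≠ 0 → z ≠ e → η z = ζ z) : C.toFun η = C.toFun ζ := by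
  set η1 : ZCfg d := Function.update η 0 (ζ 0) with hη1
  have step1 : C.toFun η = C.toFun η1 := by
    by_cases hb : η 0 = ζ 0
    · rw [show η1 = η from by rw [hη1, ← hb]; exact Function.update_eq_self _ _]
    · have hz : ζ 0 = !η 0 := by
        cases hη : η 0 <;> cases hζ : ζ 0 <;> simp_all
      rw [show η1 = zflip 0 η from by rw [hη1, hz]; rfl, h0]
  set η2 : ZCfg d := Function.update η1 e (ζ e) with hη2
  have h1e : η1 e = η e := Function.update_of_ne he0 _ _
  have step2 : C.toFun η1 = C.toFun η2 := by
    by_cases hb : η1 e = ζ e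
    · rw [show η2 = η1 from by rw [hη2, ← hb]; exact Function.update_eq_self _ _]
    · have hz : ζ e = !η1 e := by
        cases hη : η1 e <;> cases hζ : ζ e <;> simp_all
      rw [show η2 = zflip e η1 from by rw [hη2, hz]; rfl, he]
  have step3 : C.toFun η2 = C.toFun ζ := by
    apply C.cyl
    intro z hz
    by_cases hze : z = e
    · subst hze; rw [hη2]; simp [Function.update_self]
    · rw [hη2, Function.update_of_ne hze]
      by_cases hz0 : z = 0
      · subst hz0; rw [hη1]; simp [Function.update_self]
      · rw [hη1, Function.update_of_ne hz0]
        exact hagree z hz hz0 hze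
  rw [step1, step2, step3]

lemma liftCfg_shift_apply (x : Torus d n) (η : Cfg d n) (z : Fin d → ℤ) :
    liftCfg (shiftCfg x η) z = η (x + toTorus z) := rfl

lemma cylAt_swap (C : CylFun d) (j : Fin d)
    (h0 : ∀ η, C.toFun (zflip 0 η) = C.toFun η)
    (he : ∀ η, C.toFun (zflip (unitZ d j) η) = C.toFun η)
    (hfit : FitsCube d (insert 0 (insert (unitZ d j) C.supp)) n)
    (x : Torus d n) (ζ : Cfg d n) :
    cylAt C x (swapCfg x (x + unitT d n j) ζ) = cylAt C x ζ := by
  obtain ⟨aa, hcube⟩ := hfit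
  unfold cylAt
  apply cyl_indep C (unitZ d j) h0 he (unitZ_ne_zero j)
  intro z hz hz0 hze
  rw [liftCfg_shift_apply, liftCfg_shift_apply]
  have hmemz : z ∈ insert 0 (insert (unitZ d j) C.supp) := by
    simp [Finset.mem_insert, hz]
  have hmem0 : (0 : Fin d → ℤ) ∈ insert 0 (insert (unitZ d j) C.supp) := by simp
  have hmeme : unitZ d j ∈ insert 0 (insert (unitZ d j) C.supp) := by simp
  have ht0 : (toTorus z : Torus d n) ≠ 0 := by
    intro h
    exact hz0 (toTorus_inj_cube (hcube z hmemz) (hcube 0 hmem0) (by rw [h, toTorus_zero]))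
  have hte : (toTorus z : Torus d n) ≠ unitT d n j := by
    intro h
    exact hze (toTorus_inj_cube (hcube z hmemz) (hcube _ hmeme) (by rw [h, toTorus_unitZ]))
  simp only [swapCfg]
  rw [if_neg, if_neg]
  · intro h
    apply hte
    have := add_left_cancel (h.trans rfl : x + toTorus z = x + unitT d n j)
    exact this
  · intro h
    apply ht0
    have : x + toTorus z = x + 0 := by rw [h, add_zero]
    exact add_left_cancel this

end Aux2
section Aux3
set_option linter.unusedSectionVars false
variable {d n : ℕ} [NeZero n] {ρ : ℝ}

lemma sum_delta_mul (h : Cfg d n → ℝ) (r : ℝ) (κ : Cfg d n) :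
    ∑ η : Cfg d n, h η * (r * (if κ = η then (1:ℝ) else 0)) = r * h κ := by
  rw [Finset.sum_eq_single κ]
  · simp [mul_comm]
  · intro b _ hb; simp [Ne.symm hb]
  · simp

lemma sum_delta_key (h : Cfg d n → ℝ) (ζ : Cfg d n) (r : ℝ) (κ : Cfg d n) :
    ∑ η : Cfg d n, h η * (r * ((if κ = η then (1:ℝ) else 0) - (if ζ = η then 1 else 0)))
      = r * (h κ - h ζ) := by
  have step : ∀ η : Cfg d n, h η * (r * ((if κ = η then (1:ℝ) else 0) - (if ζ = η then 1 else 0)))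
      = h η * (r * (if κ = η then (1:ℝ) else 0)) - h η * (r * (if ζ = η then (1:ℝ) else 0)) :=
    fun η => by ring
  rw [Finset.sum_congr rfl fun η _ => step η, Finset.sum_sub_distrib, sum_delta_mul, sum_delta_mul]
  ring

lemma genS_delta (c : Fin d → CylFun d) (h : Cfg d n → ℝ) (ζ : Cfg d n) :
    ∑ η : Cfg d n, h η * genS d n c (fun ξ => if ξ = η then (1:ℝ) else 0) ζ
      = genS d n c h ζ := by
  unfold genS
  simp only [Finset.mul_sum]
  rw [Finset.sum_comm]
  refine Finset.sum_congr rfl fun x _ => ?_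
  rw [Finset.sum_comm]
  refine Finset.sum_congr rfl fun j _ => ?_
  exact sum_delta_key h ζ _ _

lemma genV_delta (h : Cfg d n → ℝ) (ζ : Cfg d n) :
    ∑ η : Cfg d n, h η * genV d n (fun ξ => if ξ = η then (1:ℝ) else 0) ζ
      = genV d n h ζ := by
  unfold genV
  simp only [Finset.mul_sum]
  rw [Finset.sum_comm]
  refine Finset.sum_congr rfl fun x _ => ?_
  rw [Finset.sum_comm]
  refine Finset.sum_congr rfl fun j _ => ?_
  set B1 : ℝ := (cval ζ (x + unitT d n j) - cval ζ x) ^ 2 with hB1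
  set B2 : ℝ := (cval ζ (x - unitT d n j) - cval ζ x) ^ 2 with hB2
  have e2 : B1 * (h (flipCfg x ζ) - h ζ) + B2 * (h (flipCfg x ζ) - h ζ)
      = (B1 + B2) * (h (flipCfg x ζ) - h ζ) := by ring
  rw [e2, ← sum_delta_key h ζ (B1 + B2) (flipCfg x ζ)]
  refine Finset.sum_congr rfl fun η _ => ?_
  show h η * (B1 * ((if flipCfg x ζ = η then (1:ℝ) else 0) - (if ζ = η then 1 else 0))
      + B2 * ((if flipCfg x ζ = η then (1:ℝ) else 0) - (if ζ = η then 1 else 0))) = _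
  ring

lemma adjoint_dual (hρ0 : 0 < ρ) (hρ1 : ρ < 1)
    (L : (Cfg d n → ℝ) → Cfg d n → ℝ)
    (hL : ∀ (h : Cfg d n → ℝ) (ζ : Cfg d n),
      ∑ η : Cfg d n, h η * L (fun ξ => if ξ = η then (1:ℝ) else 0) ζ = L h ζ)
    (g h : Cfg d n → ℝ) :
    ∑ η : Cfg d n, bern d n ρ η * (adjoint d n ρ L g η * h η)
      = ∑ ζ : Cfg d n, bern d n ρ ζ * g ζ * L h ζ := by
  have hb : ∀ η : Cfg d n, bern d n ρ η ≠ 0 := fun η => ne_of_gt (bern_pos hρ0 hρ1 η)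
  calc ∑ η : Cfg d n, bern d n ρ η * (adjoint d n ρ L g η * h η)
      = ∑ η : Cfg d n, (∑ ζ : Cfg d n, bern d n ρ ζ * g ζ *
          L (fun ξ => if ξ = η then (1:ℝ) else 0) ζ) * h η := by
        apply Finset.sum_congr rfl
        intro η _
        unfold adjoint
        rw [div_mul_eq_mul_div, ← mul_div_assoc, mul_comm (bern d n ρ η), mul_div_assoc,
          div_self (hb η), mul_one]
    _ = ∑ η : Cfg d n, ∑ ζ : Cfg d n, h η * (bern d n ρ ζ * g ζ *
          L (fun ξ => if ξ = η then (1:ℝ) else 0) ζ) := by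
        apply Finset.sum_congr rfl; intro η _; rw [Finset.sum_mul]
        apply Finset.sum_congr rfl; intro ζ _; ring
    _ = ∑ ζ : Cfg d n, bern d n ρ ζ * g ζ * L h ζ := by
        rw [Finset.sum_comm]
        apply Finset.sum_congr rfl
        intro ζ _
        rw [← hL h ζ, Finset.mul_sum]
        apply Finset.sum_congr rfl; intro η _; ring

lemma key_log_ineq {b c : ℝ} (hb : 0 < b) (hc : 0 < c) :
    b * (Real.log c - Real.log b) ≤ -(Real.sqrt c - Real.sqrt b)^2 + (c - b) := by
  set u := Real.sqrt b with hu
  set v := Real.sqrt c with hv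
  have hu0 : 0 < u := Real.sqrt_pos.mpr hb
  have hv0 : 0 < v := Real.sqrt_pos.mpr hc
  have hub : u^2 = b := Real.sq_sqrt hb.le
  have hvc : v^2 = c := Real.sq_sqrt hc.le
  have hlog : Real.log c - Real.log b = 2 * Real.log (v / u) := by
    rw [← hub, ← hvc, Real.log_pow, Real.log_pow, Real.log_div hv0.ne' hu0.ne']
    push_cast; ring
  have h1 : Real.log (v / u) ≤ v / u - 1 := Real.log_le_sub_one_of_pos (by positivity)
  calc b * (Real.log c - Real.log b) = 2 * u^2 * Real.log (v / u) := by rw [hlog, ← hub]; ring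
    _ ≤ 2 * u^2 * (v / u - 1) := by
        apply mul_le_mul_of_nonneg_left h1 (by positivity)
    _ = 2 * u * v - 2 * u^2 := by field_simp
    _ = -(v - u)^2 + (c - b) := by rw [← hub, ← hvc]; ring

lemma simple_log_ineq {b c : ℝ} (hb : 0 < b) (hc : 0 < c) :
    b * (Real.log c - Real.log b) ≤ c - b := by
  have := key_log_ineq hb hc
  nlinarith [sq_nonneg (Real.sqrt c - Real.sqrt b)]

end Aux3
section Aux4
set_option linter.unusedSectionVars false
variable {d n : ℕ} [NeZero n] {ρ : ℝ}

lemma voter_bond (hρ0 : 0 < ρ) (hρ1 : ρ < 1) (x y : Torus d n) (hxy : y ≠ x) (ζ : Cfg d n) :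
    bern d n ρ (flipCfg x ζ) * (cval (flipCfg x ζ) y - cval (flipCfg x ζ) x)^2
      = bern d n ρ ζ * (cval ζ y - cval ζ x)^2
        + bern d n ρ ζ * (omega d n ρ ζ x * omega d n ρ ζ y) := by
  have hP : (0:ℝ) < ρ * (1 - ρ) := by nlinarith
  have hS : Real.sqrt (ρ * (1 - ρ)) * Real.sqrt (ρ * (1 - ρ)) = ρ * (1 - ρ) :=
    Real.mul_self_sqrt hP.le
  have hSne : Real.sqrt (ρ * (1 - ρ)) ≠ 0 := ne_of_gt (Real.sqrt_pos.mpr hP)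
  have hρne : ρ ≠ 0 := ne_of_gt hρ0
  have h1ρ : (1:ℝ) - ρ ≠ 0 := by linarith
  rw [bern_flip hρ0 hρ1]
  have hy' : cval (flipCfg x ζ) y = cval ζ y := by
    simp [cval, flipCfg, Function.update_of_ne hxy]
  have hx' : flipCfg x ζ x = !ζ x := Function.update_self _ _ _
  rw [hy']
  unfold omega cval
  rw [hx']
  cases hxv : ζ x <;> cases hyv : ζ y <;>
    simp only [hxv, hyv, Bool.not_true, Bool.not_false, Bool.false_eq_true, if_true, if_false] <;>
    rw [div_mul_div_comm, hS] <;> field_simp <;> ring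

lemma voter_pair_le (hρ0 : 0 < ρ) (hρ1 : ρ < 1) (x : Torus d n) (j : Fin d) (ζ : Cfg d n) :
    bern d n ρ (flipCfg x ζ) *
        ((cval (flipCfg x ζ) (x + unitT d n j) - cval (flipCfg x ζ) x)^2
          + (cval (flipCfg x ζ) (x - unitT d n j) - cval (flipCfg x ζ) x)^2)
      ≤ bern d n ρ ζ *
          ((cval ζ (x + unitT d n j) - cval ζ x)^2 + (cval ζ (x - unitT d n j) - cval ζ x)^2)
        + bern d n ρ ζ * (omega d n ρ ζ x * omega d n ρ ζ (x + unitT d n j)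
            + omega d n ρ ζ x * omega d n ρ ζ (x - unitT d n j)) := by
  by_cases h : x + unitT d n j = x
  · have hu : unitT d n j = 0 := by
      have := h; rwa [add_eq_left] at this
    have h2 : x - unitT d n j = x := by rw [hu, sub_zero]
    rw [h, h2]
    have hb := bern_pos (d := d) (n := n) hρ0 hρ1 ζ
    have hω : 0 ≤ omega d n ρ ζ x * omega d n ρ ζ x := mul_self_nonneg _
    simp only [sub_self]
    nlinarith
  · have h' : x - unitT d n j ≠ x := by
      intro hh
      apply h
      have hu : unitT d n j = 0 := by
        have := sub_eq_self.mp hh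
        exact this
      rw [hu, add_zero]
    have e1 := voter_bond hρ0 hρ1 x (x + unitT d n j) h ζ
    have e2 := voter_bond hρ0 hρ1 x (x - unitT d n j) h' ζ
    linarith [e1, e2, le_of_eq (rfl : (0:ℝ) = 0)]

end Aux4
section Aux5
set_option linter.unusedSectionVars false
variable {d n : ℕ} [NeZero n] {ρ : ℝ}

/-- Per-(x,j) exchange sum vanishes. -/
lemma excl_exchange_zero (hρ0 : 0 < ρ) (hρ1 : ρ < 1) (C : CylFun d) (j : Fin d)
    (h0 : ∀ η, C.toFun (zflip 0 η) = C.toFun η)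
    (he : ∀ η, C.toFun (zflip (unitZ d j) η) = C.toFun η)
    (hfit : FitsCube d (insert 0 (insert (unitZ d j) C.supp)) n)
    (x : Torus d n) (f : Cfg d n → ℝ) :
    ∑ ζ : Cfg d n, bern d n ρ ζ * cylAt C x ζ * f (swapCfg x (x + unitT d n j) ζ)
      = ∑ ζ : Cfg d n, bern d n ρ ζ * cylAt C x ζ * f ζ := by
  have hinv := swapCfg_invol (d := d) (n := n) x (x + unitT d n j)
  have := sum_comp_invol hinv
    (fun ζ => bern d n ρ ζ * cylAt C x ζ * f (swapCfg x (x + unitT d n j) ζ))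
  rw [← this]
  apply Finset.sum_congr rfl
  intro ζ _
  rw [bern_swap, cylAt_swap C j h0 he hfit, hinv ζ]

/-- Main exclusion bound. -/
lemma excl_main (hρ0 : 0 < ρ) (hρ1 : ρ < 1) (𝔠₀ : ℝ) (h𝔠 : 0 < 𝔠₀)
    (c : Fin d → CylFun d)
    (hc0 : ∀ j η, 𝔠₀ ≤ (c j).toFun η)
    (hcind0 : ∀ j η, (c j).toFun (zflip 0 η) = (c j).toFun η)
    (hcinde : ∀ j η, (c j).toFun (zflip (unitZ d j) η) = (c j).toFun η)
    (hcfit : ∀ j, FitsCube d (insert 0 (insert (unitZ d j) (c j).supp)) n)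
    (f : Cfg d n → ℝ) (hf : ∀ η, 0 < f η) :
    ∑ ζ : Cfg d n, bern d n ρ ζ * f ζ * genS d n c (fun η => Real.log (f η) + 1) ζ
      ≤ -2 * dirichlet d n ρ c f := by
  have hcyl : ∀ (j : Fin d) (x : Torus d n) (ζ : Cfg d n), (0:ℝ) ≤ cylAt (c j) x ζ :=
    fun j x ζ => le_trans h𝔠.le (hc0 j _)
  have hbern : ∀ ζ : Cfg d n, (0:ℝ) < bern d n ρ ζ := bern_pos hρ0 hρ1
  -- rewrite LHS as sum over x, j of per-pair sums
  have step1 : ∑ ζ : Cfg d n, bern d n ρ ζ * f ζ * genS d n c (fun η => Real.log (f η) + 1) ζ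
      = ∑ x : Torus d n, ∑ j : Fin d, ∑ ζ : Cfg d n,
          bern d n ρ ζ * cylAt (c j) x ζ *
            (f ζ * (Real.log (f (swapCfg x (x + unitT d n j) ζ)) - Real.log (f ζ))) := by
    unfold genS
    simp only [Finset.mul_sum]
    conv_lhs => rw [Finset.sum_comm]
    apply Finset.sum_congr rfl; intro x _
    conv_lhs => rw [Finset.sum_comm]
    apply Finset.sum_congr rfl; intro j _
    apply Finset.sum_congr rfl; intro ζ _
    ring
  rw [step1]
  have step2 : ∀ (x : Torus d n) (j : Fin d),
      ∑ ζ : Cfg d n, bern d n ρ ζ * cylAt (c j) x ζ *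
          (f ζ * (Real.log (f (swapCfg x (x + unitT d n j) ζ)) - Real.log (f ζ)))
      ≤ - ∑ ζ : Cfg d n, bern d n ρ ζ *
          (cylAt (c j) x ζ *
            (Real.sqrt (f (swapCfg x (x + unitT d n j) ζ)) - Real.sqrt (f ζ))^2) := by
    intro x j
    have hpt : ∀ ζ : Cfg d n,
        bern d n ρ ζ * cylAt (c j) x ζ *
            (f ζ * (Real.log (f (swapCfg x (x + unitT d n j) ζ)) - Real.log (f ζ)))
        ≤ bern d n ρ ζ * cylAt (c j) x ζ *
            (-(Real.sqrt (f (swapCfg x (x + unitT d n j) ζ)) - Real.sqrt (f ζ))^2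
              + (f (swapCfg x (x + unitT d n j) ζ) - f ζ)) := by
      intro ζ
      apply mul_le_mul_of_nonneg_left
        (key_log_ineq (hf ζ) (hf (swapCfg x (x + unitT d n j) ζ)))
        (mul_nonneg (hbern ζ).le (hcyl j x ζ))
    calc ∑ ζ : Cfg d n, bern d n ρ ζ * cylAt (c j) x ζ *
            (f ζ * (Real.log (f (swapCfg x (x + unitT d n j) ζ)) - Real.log (f ζ)))
        ≤ ∑ ζ : Cfg d n, bern d n ρ ζ * cylAt (c j) x ζ *
            (-(Real.sqrt (f (swapCfg x (x + unitT d n j) ζ)) - Real.sqrt (f ζ))^2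
              + (f (swapCfg x (x + unitT d n j) ζ) - f ζ)) :=
          Finset.sum_le_sum fun ζ _ => hpt ζ
      _ = - ∑ ζ : Cfg d n, bern d n ρ ζ *
            (cylAt (c j) x ζ *
              (Real.sqrt (f (swapCfg x (x + unitT d n j) ζ)) - Real.sqrt (f ζ))^2)
          + (∑ ζ : Cfg d n, bern d n ρ ζ * cylAt (c j) x ζ * f (swapCfg x (x + unitT d n j) ζ)
             - ∑ ζ : Cfg d n, bern d n ρ ζ * cylAt (c j) x ζ * f ζ) := by
          rw [← Finset.sum_sub_distrib, ← Finset.sum_neg_distrib, ← Finset.sum_add_distrib]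
          apply Finset.sum_congr rfl; intro ζ _; ring
      _ = - ∑ ζ : Cfg d n, bern d n ρ ζ *
            (cylAt (c j) x ζ *
              (Real.sqrt (f (swapCfg x (x + unitT d n j) ζ)) - Real.sqrt (f ζ))^2) := by
          rw [excl_exchange_zero hρ0 hρ1 (c j) j (hcind0 j) (hcinde j) (hcfit j) x f]
          ring
  calc ∑ x : Torus d n, ∑ j : Fin d, ∑ ζ : Cfg d n,
        bern d n ρ ζ * cylAt (c j) x ζ *
          (f ζ * (Real.log (f (swapCfg x (x + unitT d n j) ζ)) - Real.log (f ζ)))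
      ≤ ∑ x : Torus d n, ∑ j : Fin d, - ∑ ζ : Cfg d n, bern d n ρ ζ *
          (cylAt (c j) x ζ *
            (Real.sqrt (f (swapCfg x (x + unitT d n j) ζ)) - Real.sqrt (f ζ))^2) :=
        Finset.sum_le_sum fun x _ => Finset.sum_le_sum fun j _ => step2 x j
    _ = -2 * dirichlet d n ρ c f := by
        simp only [dirichlet, _root_.expect, Finset.mul_sum]
        conv_lhs => rw [Finset.sum_comm]
        apply Finset.sum_congr rfl; intro j _
        apply Finset.sum_congr rfl; intro x _
        rw [← Finset.sum_neg_distrib]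
        apply Finset.sum_congr rfl; intro ζ _
        ring

end Aux5
section Aux6
set_option linter.unusedSectionVars false
variable {d n : ℕ} [NeZero n] {ρ : ℝ}

lemma shift_sum (j : Fin d) (ζ : Cfg d n) :
    ∑ x : Torus d n, omega d n ρ ζ x * omega d n ρ ζ (x - unitT d n j)
      = ∑ x : Torus d n, omega d n ρ ζ x * omega d n ρ ζ (x + unitT d n j) :=
  (Fintype.sum_bijective (fun x => x + unitT d n j) (Equiv.addRight (unitT d n j)).bijective
    _ _ (fun x => by rw [add_sub_cancel_right]; ring)).symm

lemma voter_main (hρ0 : 0 < ρ) (hρ1 : ρ < 1) (f : Cfg d n → ℝ) (hf : ∀ η, 0 < f η) :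
    ∑ ζ : Cfg d n, bern d n ρ ζ * f ζ * genV d n (fun η => Real.log (f η) + 1) ζ
      ≤ ∑ ζ : Cfg d n, bern d n ρ ζ * (Vfun d n ρ ζ * f ζ) := by
  have hbern : ∀ ζ : Cfg d n, (0:ℝ) < bern d n ρ ζ := bern_pos hρ0 hρ1
  have step1 : ∑ ζ : Cfg d n, bern d n ρ ζ * f ζ * genV d n (fun η => Real.log (f η) + 1) ζ
      = ∑ x : Torus d n, ∑ j : Fin d, ∑ ζ : Cfg d n,
          bern d n ρ ζ *
            ((cval ζ (x + unitT d n j) - cval ζ x)^2 + (cval ζ (x - unitT d n j) - cval ζ x)^2) *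
            (f ζ * (Real.log (f (flipCfg x ζ)) - Real.log (f ζ))) := by
    unfold genV
    simp only [Finset.mul_sum]
    conv_lhs => rw [Finset.sum_comm]
    apply Finset.sum_congr rfl; intro x _
    conv_lhs => rw [Finset.sum_comm]
    apply Finset.sum_congr rfl; intro j _
    apply Finset.sum_congr rfl; intro ζ _
    ring
  rw [step1]
  have step2 : ∀ (x : Torus d n) (j : Fin d),
      ∑ ζ : Cfg d n, bern d n ρ ζ *
          ((cval ζ (x + unitT d n j) - cval ζ x)^2 + (cval ζ (x - unitT d n j) - cval ζ x)^2) *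
          (f ζ * (Real.log (f (flipCfg x ζ)) - Real.log (f ζ)))
      ≤ ∑ ζ : Cfg d n, bern d n ρ ζ *
          (omega d n ρ ζ x * omega d n ρ ζ (x + unitT d n j)
            + omega d n ρ ζ x * omega d n ρ ζ (x - unitT d n j)) * f ζ := by
    intro x j
    have hBpos : ∀ ζ : Cfg d n, (0:ℝ) ≤
        (cval ζ (x + unitT d n j) - cval ζ x)^2 + (cval ζ (x - unitT d n j) - cval ζ x)^2 := by
      intro ζ; positivity
    calc ∑ ζ : Cfg d n, bern d n ρ ζ *
            ((cval ζ (x + unitT d n j) - cval ζ x)^2 + (cval ζ (x - unitT d n j) - cval ζ x)^2) *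
            (f ζ * (Real.log (f (flipCfg x ζ)) - Real.log (f ζ)))
        ≤ ∑ ζ : Cfg d n, bern d n ρ ζ *
            ((cval ζ (x + unitT d n j) - cval ζ x)^2 + (cval ζ (x - unitT d n j) - cval ζ x)^2) *
            (f (flipCfg x ζ) - f ζ) := by
          apply Finset.sum_le_sum
          intro ζ _
          exact mul_le_mul_of_nonneg_left (simple_log_ineq (hf ζ) (hf (flipCfg x ζ)))
            (mul_nonneg (hbern ζ).le (hBpos ζ))
      _ = ∑ ζ : Cfg d n, (bern d n ρ (flipCfg x ζ) *
            ((cval (flipCfg x ζ) (x + unitT d n j) - cval (flipCfg x ζ) x)^2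
              + (cval (flipCfg x ζ) (x - unitT d n j) - cval (flipCfg x ζ) x)^2)
            - bern d n ρ ζ *
            ((cval ζ (x + unitT d n j) - cval ζ x)^2 + (cval ζ (x - unitT d n j) - cval ζ x)^2))
            * f ζ := by
          have split : ∀ ζ : Cfg d n, bern d n ρ ζ *
              ((cval ζ (x + unitT d n j) - cval ζ x)^2 + (cval ζ (x - unitT d n j) - cval ζ x)^2) *
              (f (flipCfg x ζ) - f ζ)
              = bern d n ρ ζ *
                ((cval ζ (x + unitT d n j) - cval ζ x)^2 + (cval ζ (x - unitT d n j) - cval ζ x)^2) *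
                f (flipCfg x ζ)
                - bern d n ρ ζ *
                ((cval ζ (x + unitT d n j) - cval ζ x)^2 + (cval ζ (x - unitT d n j) - cval ζ x)^2) *
                f ζ := fun ζ => by ring
          rw [Finset.sum_congr rfl fun ζ _ => split ζ, Finset.sum_sub_distrib]
          have hcv := sum_comp_invol (flipCfg_invol (d := d) (n := n) x)
            (fun ζ => bern d n ρ ζ *
              ((cval ζ (x + unitT d n j) - cval ζ x)^2 + (cval ζ (x - unitT d n j) - cval ζ x)^2) *
              f (flipCfg x ζ))
          rw [← hcv]
          rw [Finset.sum_congr rfl fun ζ _ => by rw [flipCfg_invol x ζ]]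
          rw [← Finset.sum_sub_distrib]
          apply Finset.sum_congr rfl; intro ζ _
          ring
      _ ≤ ∑ ζ : Cfg d n, bern d n ρ ζ *
            (omega d n ρ ζ x * omega d n ρ ζ (x + unitT d n j)
              + omega d n ρ ζ x * omega d n ρ ζ (x - unitT d n j)) * f ζ := by
          apply Finset.sum_le_sum
          intro ζ _
          have hp := mul_le_mul_of_nonneg_right (voter_pair_le hρ0 hρ1 x j ζ) (hf ζ).le
          nlinarith [hp]
  calc ∑ x : Torus d n, ∑ j : Fin d, ∑ ζ : Cfg d n,
        bern d n ρ ζ *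
          ((cval ζ (x + unitT d n j) - cval ζ x)^2 + (cval ζ (x - unitT d n j) - cval ζ x)^2) *
          (f ζ * (Real.log (f (flipCfg x ζ)) - Real.log (f ζ)))
      ≤ ∑ x : Torus d n, ∑ j : Fin d, ∑ ζ : Cfg d n, bern d n ρ ζ *
          (omega d n ρ ζ x * omega d n ρ ζ (x + unitT d n j)
            + omega d n ρ ζ x * omega d n ρ ζ (x - unitT d n j)) * f ζ :=
        Finset.sum_le_sum fun x _ => Finset.sum_le_sum fun j _ => step2 x j
    _ = ∑ ζ : Cfg d n, ∑ j : Fin d, ∑ x : Torus d n, bern d n ρ ζ *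
          (omega d n ρ ζ x * omega d n ρ ζ (x + unitT d n j)
            + omega d n ρ ζ x * omega d n ρ ζ (x - unitT d n j)) * f ζ := by
        -- reorder sums
        conv_lhs => enter [2, x]; rw [Finset.sum_comm]
        conv_lhs => rw [Finset.sum_comm]
        conv_lhs => enter [2, ζ]; rw [Finset.sum_comm]
    _ = ∑ ζ : Cfg d n, bern d n ρ ζ * (Vfun d n ρ ζ * f ζ) := by
        apply Finset.sum_congr rfl; intro ζ _
        unfold Vfun
        calc ∑ j : Fin d, ∑ x : Torus d n, bern d n ρ ζ *
              (omega d n ρ ζ x * omega d n ρ ζ (x + unitT d n j)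
                + omega d n ρ ζ x * omega d n ρ ζ (x - unitT d n j)) * f ζ
            = ∑ j : Fin d, ((bern d n ρ ζ * f ζ) *
                (∑ x : Torus d n, omega d n ρ ζ x * omega d n ρ ζ (x + unitT d n j))
              + (bern d n ρ ζ * f ζ) *
                (∑ x : Torus d n, omega d n ρ ζ x * omega d n ρ ζ (x - unitT d n j))) := by
              apply Finset.sum_congr rfl; intro j _
              rw [Finset.mul_sum, Finset.mul_sum, ← Finset.sum_add_distrib]
              apply Finset.sum_congr rfl; intro x _; ring
          _ = ∑ j : Fin d, (2 * (bern d n ρ ζ * f ζ)) *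
                (∑ x : Torus d n, omega d n ρ ζ x * omega d n ρ ζ (x + unitT d n j)) := by
              apply Finset.sum_congr rfl; intro j _
              rw [shift_sum j ζ]; ring
          _ = bern d n ρ ζ *
              ((2 * ∑ j : Fin d, ∑ x : Torus d n,
                omega d n ρ ζ x * omega d n ρ ζ (x + unitT d n j)) * f ζ) := by
              rw [← Finset.mul_sum]; ring
end Aux6
/-- `H'_n(t) ≤ -2 n² I_n(f_t) + a_n ∫ V f_t dν^n_ρ`. -/
theorem entropy_production_dirichlet
    (d n : ℕ) [NeZero n] (hd : 1 ≤ d) (ρ 𝔠₀ : ℝ) (hρ0 : 0 < ρ) (hρ1 : ρ < 1)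
    (h𝔠 : 0 < 𝔠₀) (c : Fin d → CylFun d)
    (hc0 : ∀ j η, 𝔠₀ ≤ (c j).toFun η)
    (hcind0 : ∀ j η, (c j).toFun (zflip 0 η) = (c j).toFun η)
    (hcinde : ∀ j η, (c j).toFun (zflip (unitZ d j) η) = (c j).toFun η)
    (hcfit : ∀ j, FitsCube d (insert 0 (insert (unitZ d j) (c j).supp)) n)
    (a : ℝ) (ha : 0 < a)
    (f : ℝ → Cfg d n → ℝ)
    (hdens : ∀ t, 0 ≤ t → IsDensity d n ρ (f t))
    (hpos : ∀ t η, 0 ≤ t → 0 < f t η)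
    (hKFE : ∀ t η, 0 ≤ t → HasDerivWithinAt (fun s => f s η)
      ((n : ℝ) ^ 2 * adjoint d n ρ (genS d n c) (f t) η
        + a * adjoint d n ρ (genV d n) (f t) η) (Set.Ici 0) t)
    (t : ℝ) (ht : 0 ≤ t) :
    ∃ D : ℝ, HasDerivWithinAt (fun s => entropy d n ρ (f s)) D (Set.Ici 0) t ∧
      D ≤ -2 * (n : ℝ) ^ 2 * dirichlet d n ρ c (f t)
          + a * expect d n ρ (fun η => Vfun d n ρ η * f t η) := by
  classical
  set φ : Cfg d n → ℝ := fun η => (n : ℝ) ^ 2 * adjoint d n ρ (genS d n c) (f t) η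
      + a * adjoint d n ρ (genV d n) (f t) η with hφ
  refine ⟨∑ η : Cfg d n, bern d n ρ η * (φ η * (Real.log (f t η) + 1)), ?_, ?_⟩
  · have hsum : HasDerivWithinAt
        (fun s => ∑ η : Cfg d n, bern d n ρ η * (f s η * Real.log (f s η)))
        (∑ η : Cfg d n, bern d n ρ η * (φ η * (Real.log (f t η) + 1))) (Set.Ici 0) t := by
      apply HasDerivWithinAt.fun_sum
      intro η _
      have h1 := hKFE t η ht
      have hne : f t η ≠ 0 := (hpos t η ht).ne'
      have h2 : HasDerivWithinAt (fun s => Real.log (f s η))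
          (((n : ℝ) ^ 2 * adjoint d n ρ (genS d n c) (f t) η
            + a * adjoint d n ρ (genV d n) (f t) η) / f t η) (Set.Ici 0) t := h1.log hne
      have h3 := h1.mul h2
      have h4 := h3.const_mul (bern d n ρ η)
      convert h4 using 1
      · rfl
      · rfl
      have hcancel : f t η * (((n : ℝ) ^ 2 * adjoint d n ρ (genS d n c) (f t) η
          + a * adjoint d n ρ (genV d n) (f t) η) / f t η)
          = (n : ℝ) ^ 2 * adjoint d n ρ (genS d n c) (f t) η
            + a * adjoint d n ρ (genV d n) (f t) η := by
        field_simp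
      rw [hcancel, hφ]
      ring
    exact hsum
  · set h : Cfg d n → ℝ := fun η => Real.log (f t η) + 1 with hh
    have hsplit : ∑ η : Cfg d n, bern d n ρ η * (φ η * (Real.log (f t η) + 1))
        = (n : ℝ) ^ 2 * (∑ η : Cfg d n, bern d n ρ η *
            (adjoint d n ρ (genS d n c) (f t) η * h η))
          + a * (∑ η : Cfg d n, bern d n ρ η *
            (adjoint d n ρ (genV d n) (f t) η * h η)) := by
      rw [Finset.mul_sum, Finset.mul_sum, ← Finset.sum_add_distrib]
      apply Finset.sum_congr rfl; intro η _
      rw [hφ, hh]; ring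
    rw [hsplit]
    rw [adjoint_dual hρ0 hρ1 (genS d n c) (genS_delta c) (f t) h,
      adjoint_dual hρ0 hρ1 (genV d n) genV_delta (f t) h]
    have hfpos : ∀ η, 0 < f t η := fun η => hpos t η ht
    have e1 := excl_main hρ0 hρ1 𝔠₀ h𝔠 c hc0 hcind0 hcinde hcfit (f t) hfpos
    have e2 := voter_main hρ0 hρ1 (f t) hfpos
    have hn2 : (0:ℝ) ≤ (n : ℝ) ^ 2 := by positivity
    have e1' : (n : ℝ) ^ 2 * ∑ ζ : Cfg d n, bern d n ρ ζ * f t ζ * genS d n c h ζ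
        ≤ (n : ℝ) ^ 2 * (-2 * dirichlet d n ρ c (f t)) :=
      mul_le_mul_of_nonneg_left e1 hn2
    have e2' : a * ∑ ζ : Cfg d n, bern d n ρ ζ * f t ζ * genV d n h ζ
        ≤ a * ∑ ζ : Cfg d n, bern d n ρ ζ * (Vfun d n ρ ζ * f t ζ) :=
      mul_le_mul_of_nonneg_left e2 ha.le
    have hexp : expect d n ρ (fun η => Vfun d n ρ η * f t η)
        = ∑ ζ : Cfg d n, bern d n ρ ζ * (Vfun d n ρ ζ * f t ζ) := rfl
    have hring : (n : ℝ) ^ 2 * (-2 * dirichlet d n ρ c (f t))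
        = -2 * (n : ℝ) ^ 2 * dirichlet d n ρ c (f t) := by ring
    rw [hexp]
    linarith
end

section
/- There exists a finite constant C_d, depending only on the dimension d, such that for every integer ℓ ≥ 1 there is a flow Φ_ℓ connecting the Dirac measure at the origin to the measure m^{(2)}_ℓ which is supported on nearest-neighbour bonds inside Λ_{2ℓ−1}, i.e. Φ_ℓ(x,y) = 0 whenever ‖y − x‖_1 ≠ 1 or {x,y} ⊄ Λ_{2ℓ−1}, and which satisfies Σ_{j=1}^d Σ_{x∈ℤ^d} Φ_ℓ(x, x+e_j)² ≤ C_d g_d(ℓ). -/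
open Finset

section BoxLemmas

lemma mem_box {d L : ℕ} {x : Fin d → ℤ} :
    x ∈ box d L ↔ ∀ i, 0 ≤ x i ∧ x i < (L : ℤ) := by
  simp [_root_.box, Fintype.mem_piFinset, Finset.mem_Ico]

lemma box_mono {d s L : ℕ} (h : s ≤ L) : box d s ⊆ box d L := by
  intro x hx
  rw [mem_box] at *
  intro i
  have h2 := hx i
  have : (s : ℤ) ≤ (L : ℤ) := by exact_mod_cast h
  omega

lemma card_box (d L : ℕ) : (box d L).card = L ^ d := by
  simp [_root_.box, Fintype.card_piFinset]

lemma box_one {d : ℕ} : box d 1 = {0} := by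
  ext x
  rw [mem_box]
  simp only [Finset.mem_singleton]
  constructor
  · intro h; funext i; have := h i; simp only [Nat.cast_one] at this
    have : x i = 0 := by omega
    simpa using this
  · rintro rfl i; simp

lemma mker_nonneg {d s : ℕ} (z : Fin d → ℤ) : 0 ≤ mker d s z := by
  unfold mker; split <;> positivity

lemma mker_le {d s : ℕ} (z : Fin d → ℤ) : mker d s z ≤ ((s : ℝ) ^ d)⁻¹ := by
  unfold mker; split
  · exact le_rfl
  · positivity

lemma mker_eq_zero {d s : ℕ} {z : Fin d → ℤ} (h : z ∉ box d s) : mker d s z = 0 := by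
  simp [mker, h]

lemma sum_mker {d s : ℕ} (hs : 1 ≤ s) {S : Finset (Fin d → ℤ)} (h : box d s ⊆ S) :
    ∑ z ∈ S, mker d s z = 1 := by
  rw [← Finset.sum_subset h (fun z _ hz => mker_eq_zero hz)]
  have : ∀ z ∈ box d s, mker d s z = ((s : ℝ) ^ d)⁻¹ := fun z hz => by simp [mker, hz]
  rw [Finset.sum_congr rfl this, Finset.sum_const, card_box, nsmul_eq_mul]
  have hs0 : (0 : ℝ) < (s : ℝ) ^ d := by positivity
  push_cast
  field_simp

lemma m2ker_nonneg {d ℓ : ℕ} (z : Fin d → ℤ) : 0 ≤ m2ker d ℓ z := by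
  apply Finset.sum_nonneg
  intro y _
  exact mul_nonneg (mker_nonneg y) (mker_nonneg _)

lemma m2ker_le {d ℓ : ℕ} (hl : 1 ≤ ℓ) (z : Fin d → ℤ) :
    m2ker d ℓ z ≤ ((ℓ : ℝ) ^ d)⁻¹ := by
  calc m2ker d ℓ z ≤ ∑ y ∈ box d ℓ, mker d ℓ y * ((ℓ : ℝ) ^ d)⁻¹ := by
        apply Finset.sum_le_sum
        intro y _
        exact mul_le_mul_of_nonneg_left (mker_le _) (mker_nonneg y)
    _ = ((ℓ : ℝ) ^ d)⁻¹ := by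
        rw [← Finset.sum_mul, sum_mker hl subset_rfl, one_mul]

lemma mem_box_of_pair {d ℓ : ℕ} {y w : Fin d → ℤ} (hy : y ∈ box d ℓ)
    (hw : w ∈ box d ℓ) : y + w ∈ box d (2 * ℓ - 1) := by
  rw [mem_box] at *
  intro i
  have h1 := hy i
  have h2 := hw i
  simp only [Pi.add_apply]
  omega

lemma m2ker_eq_zero {d ℓ : ℕ} {z : Fin d → ℤ} (h : z ∉ box d (2 * ℓ - 1)) :
    m2ker d ℓ z = 0 := by
  apply Finset.sum_eq_zero
  intro y hy
  by_cases h1 : z - y ∈ box d ℓ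
  · exact absurd (by simpa using mem_box_of_pair hy h1) h
  · rw [mker_eq_zero h1, mul_zero]

lemma sum_m2ker {d ℓ : ℕ} (hl : 1 ≤ ℓ) :
    ∑ z ∈ box d (2 * ℓ - 1), m2ker d ℓ z = 1 := by
  unfold m2ker
  rw [Finset.sum_comm]
  have key : ∀ y ∈ box d ℓ, ∑ z ∈ box d (2 * ℓ - 1), mker d ℓ (z - y) = 1 := by
    intro y hy
    have himg : (box d ℓ).image (· + y) ⊆ box d (2 * ℓ - 1) := by
      intro z hz
      rw [Finset.mem_image] at hz
      obtain ⟨w, hw, rfl⟩ := hz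
      exact mem_box_of_pair hw hy
    rw [← Finset.sum_subset himg]
    · rw [Finset.sum_image (by intro a _ b _ h; exact add_right_cancel h)]
      simpa using sum_mker hl (subset_rfl : box d ℓ ⊆ box d ℓ)
    · intro z _ hz
      apply mker_eq_zero
      intro hc
      exact hz (Finset.mem_image.mpr ⟨z - y, hc, by ring⟩)
  calc ∑ y ∈ box d ℓ, ∑ z ∈ box d (2 * ℓ - 1), mker d ℓ y * mker d ℓ (z - y)
      = ∑ y ∈ box d ℓ, mker d ℓ y * ∑ z ∈ box d (2 * ℓ - 1), mker d ℓ (z - y) := by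
        simp [Finset.mul_sum]
    _ = ∑ y ∈ box d ℓ, mker d ℓ y := by
        apply Finset.sum_congr rfl
        intro y hy
        rw [key y hy, mul_one]
    _ = 1 := sum_mker hl subset_rfl

lemma m2ker_one {d : ℕ} : m2ker d 1 = mker d 1 := by
  funext z
  unfold m2ker
  rw [box_one, Finset.sum_singleton]
  have : mker d 1 0 = 1 := by simp [mker, box_one]
  rw [this, one_mul, sub_zero]

end BoxLemmas

section Step

variable (d L : ℕ) (f : (Fin d → ℤ) → ℝ)

/-- Sites of the box agreeing with `x` on coordinates `≥ t`. -/
noncomputable def colQF (t : ℕ) (x : Fin d → ℤ) : Finset (Fin d → ℤ) :=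
  (box d L).filter (fun y => ∀ i : Fin d, t ≤ i.val → y i = x i)

noncomputable def colQ (t : ℕ) (x : Fin d → ℤ) : ℝ := ∑ y ∈ colQF d L t x, f y

noncomputable def colAF (j : Fin d) (x : Fin d → ℤ) : Finset (Fin d → ℤ) :=
  (colQF d L (j.val + 1) x).filter (fun y => y j ≤ x j)

noncomputable def colA (j : Fin d) (x : Fin d → ℤ) : ℝ := ∑ y ∈ colAF d L j x, f y

noncomputable def stepFlow (j : Fin d) (x : Fin d → ℤ) : ℝ :=
  if x ∈ box d L ∧ x j + 1 < (L : ℤ) then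
    ((L : ℝ)⁻¹) ^ (j.val) *
      (colA d L f j x - ((x j + 1 : ℤ) : ℝ) / (L : ℝ) * colQ d L f (j.val + 1) x)
  else 0

variable {d L f}

lemma stepFlow_ne_zero {j : Fin d} {x : Fin d → ℤ}
    (h : stepFlow d L f j x ≠ 0) :
    x ∈ box d L ∧ x + unitZ d j ∈ box d L := by
  rw [stepFlow] at h
  split at h
  · rename_i hc
    obtain ⟨h1, h2⟩ := hc
    refine ⟨h1, ?_⟩
    rw [mem_box] at h1 ⊢
    intro i
    have := h1 i
    simp only [Pi.add_apply, unitZ]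
    by_cases hij : i = j
    · subst hij; simp; omega
    · simp [hij]; omega
  · exact absurd rfl h

lemma colQF_sub_unit (j : Fin d) (x : Fin d → ℤ) :
    colQF d L (j.val + 1) (x - unitZ d j) = colQF d L (j.val + 1) x := by
  unfold colQF
  apply Finset.filter_congr
  intro y _
  constructor <;> intro h i hi
  · have hij : i ≠ j := by intro e; subst e; omega
    have := h i hi
    simpa [unitZ, hij] using this
  · have hij : i ≠ j := by intro e; subst e; omega
    simp [unitZ, hij, h i hi]

/-- slab decomposition -/
lemma colA_slab (j : Fin d) (x : Fin d → ℤ) :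
    colA d L f j x = colA d L f j (x - unitZ d j) + colQ d L f j.val x := by
  have hxj : (x - unitZ d j) j = x j - 1 := by simp [unitZ]
  have h1 : (colAF d L j x).filter (fun y => y j = x j) = colQF d L j.val x := by
    ext y
    simp only [colAF, colQF, Finset.mem_filter]
    constructor
    · rintro ⟨⟨⟨hb, hc⟩, _⟩, he⟩
      refine ⟨hb, fun i hi => ?_⟩
      rcases Nat.eq_or_lt_of_le hi with h1 | h1
      · have : i = j := Fin.ext h1.symm
        subst this; exact he
      · exact hc i h1
    · rintro ⟨hb, hc⟩
      have he : y j = x j := hc j le_rfl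
      exact ⟨⟨⟨hb, fun i hi => hc i (by omega)⟩, by omega⟩, he⟩
  have h2 : (colAF d L j x).filter (fun y => ¬ (y j = x j)) = colAF d L j (x - unitZ d j) := by
    ext y
    simp only [colAF, colQF_sub_unit, Finset.mem_filter, hxj]
    constructor
    · rintro ⟨⟨hb, hc⟩, he⟩
      exact ⟨hb, by omega⟩
    · rintro ⟨hb, he⟩
      exact ⟨⟨hb, by omega⟩, by omega⟩
  have hsplit := Finset.sum_filter_add_sum_filter_not (colAF d L j x) (fun y => y j = x j) f
  unfold colA colQ
  rw [← hsplit, h1, h2, add_comm]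

lemma colAF_eq_empty {j : Fin d} {x : Fin d → ℤ} (h : x j < 0) :
    colAF d L j x = ∅ := by
  apply Finset.filter_false_of_mem
  intro y hy
  simp only [colQF, Finset.mem_filter, mem_box] at hy
  have := hy.1 j
  omega

lemma colAF_full {j : Fin d} {x : Fin d → ℤ} (h : (L : ℤ) ≤ x j + 1) :
    colAF d L j x = colQF d L (j.val + 1) x := by
  unfold colAF
  apply Finset.filter_true_of_mem
  intro y hy
  simp only [colQF, Finset.mem_filter, mem_box] at hy
  have := hy.1 j
  omega

lemma colQF_L1 {t : ℕ} {x : Fin d → ℤ} (hL : L = 1) (hx : x ∈ box d L) :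
    colQF d L t x = box d L := by
  subst hL
  unfold colQF
  apply Finset.filter_true_of_mem
  intro y hy
  rw [box_one, Finset.mem_singleton] at hy hx
  subst hy; subst hx
  intro i _
  rfl

end Step

section Div

variable {d L : ℕ} {f : (Fin d → ℤ) → ℝ}

lemma stepFlow_div_j (hL : 1 ≤ L) {x : Fin d → ℤ} (hx : x ∈ box d L) (j : Fin d) :
    stepFlow d L f j x - stepFlow d L f j (x - unitZ d j)
      = ((L : ℝ)⁻¹) ^ j.val *
          (colQ d L f j.val x - (L : ℝ)⁻¹ * colQ d L f (j.val + 1) x) := by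
  have hLR : (0 : ℝ) < (L : ℝ) := by positivity
  have hxj : (x - unitZ d j) j = x j - 1 := by simp [unitZ]
  have hbox := (mem_box.mp hx) j
  have hQ := colQF_sub_unit (L := L) j x
  have hB : colQ d L f (j.val + 1) (x - unitZ d j) = colQ d L f (j.val + 1) x := by
    unfold colQ; rw [hQ]
  have hslab := colA_slab (L := L) (f := f) j x
  have hmem : ∀ (z : Fin d → ℤ), z ∈ box d L ↔ ∀ i, 0 ≤ z i ∧ z i < (L : ℤ) := fun z => mem_box
  by_cases h1 : x j + 1 < (L : ℤ)
  · -- interior in direction j (flow out of x exists)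
    have hs1 : stepFlow d L f j x
        = ((L : ℝ)⁻¹) ^ j.val *
          (colA d L f j x - ((x j + 1 : ℤ) : ℝ) / (L : ℝ) * colQ d L f (j.val + 1) x) := by
      rw [stepFlow, if_pos ⟨hx, h1⟩]
    by_cases h2 : 0 ≤ x j - 1
    · have hx' : x - unitZ d j ∈ box d L := by
        rw [mem_box]
        intro i
        by_cases hij : i = j
        · subst hij; rw [hxj]; omega
        · have : (x - unitZ d j) i = x i := by simp [unitZ, hij]
          rw [this]; exact (mem_box.mp hx) i
      have hs2 : stepFlow d L f j (x - unitZ d j)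
          = ((L : ℝ)⁻¹) ^ j.val *
            (colA d L f j (x - unitZ d j)
              - (((x j - 1) + 1 : ℤ) : ℝ) / (L : ℝ) * colQ d L f (j.val + 1) x) := by
        rw [stepFlow, if_pos ⟨hx', by rw [hxj]; omega⟩, hxj, hB]
      rw [hs1, hs2, hslab]
      push_cast
      field_simp
      ring
    · -- x j = 0
      have hxj0 : x j = 0 := by omega
      have hs2 : stepFlow d L f j (x - unitZ d j) = 0 := by
        rw [stepFlow, if_neg]
        rintro ⟨hb, _⟩
        have := (mem_box.mp hb) j
        rw [hxj] at this
        omega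
      have hA0 : colA d L f j (x - unitZ d j) = 0 := by
        unfold colA
        rw [colAF_eq_empty (by rw [hxj]; omega)]
        simp
      rw [hs1, hs2, hslab, hA0, hxj0]
      push_cast
      field_simp
      ring
  · -- x j = L - 1 : no flow out of x in direction j
    have hxjL : x j = (L : ℤ) - 1 := by omega
    have hs1 : stepFlow d L f j x = 0 := by
      rw [stepFlow, if_neg]; rintro ⟨_, hc⟩; omega
    have hAfull : colA d L f j x = colQ d L f (j.val + 1) x := by
      unfold colA colQ; rw [colAF_full (by omega)]
    by_cases h2 : 0 ≤ x j - 1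
    · have hx' : x - unitZ d j ∈ box d L := by
        rw [mem_box]
        intro i
        by_cases hij : i = j
        · subst hij; rw [hxj]; omega
        · have : (x - unitZ d j) i = x i := by simp [unitZ, hij]
          rw [this]; exact (mem_box.mp hx) i
      have hs2 : stepFlow d L f j (x - unitZ d j)
          = ((L : ℝ)⁻¹) ^ j.val *
            (colA d L f j (x - unitZ d j)
              - (((x j - 1) + 1 : ℤ) : ℝ) / (L : ℝ) * colQ d L f (j.val + 1) x) := by
        rw [stepFlow, if_pos ⟨hx', by rw [hxj]; omega⟩, hxj, hB]
      have hA' : colA d L f j (x - unitZ d j)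
          = colQ d L f (j.val + 1) x - colQ d L f j.val x := by
        rw [← hAfull, hslab]; ring
      rw [hs1, hs2, hA', hxjL]
      push_cast
      field_simp
      ring
    · -- L = 1
      have hL1 : L = 1 := by omega
      have hs2 : stepFlow d L f j (x - unitZ d j) = 0 := by
        rw [stepFlow, if_neg]
        rintro ⟨hb, _⟩
        have := (mem_box.mp hb) j
        rw [hxj] at this
        omega
      have hq1 : colQ d L f j.val x = colQ d L f (j.val + 1) x := by
        unfold colQ
        rw [colQF_L1 hL1 hx, colQF_L1 hL1 hx]
      rw [hs1, hs2, hq1, hL1]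
      norm_num

lemma stepFlow_div (hL : 1 ≤ L) (hsupp : ∀ y, y ∉ box d L → f y = 0)
    (hsum : ∑ y ∈ box d L, f y = 0) (x : Fin d → ℤ) :
    ∑ j : Fin d, (stepFlow d L f j x - stepFlow d L f j (x - unitZ d j)) = f x := by
  by_cases hx : x ∈ box d L
  · have key : ∀ j : Fin d,
        stepFlow d L f j x - stepFlow d L f j (x - unitZ d j)
          = ((L : ℝ)⁻¹) ^ j.val * colQ d L f j.val x
            - ((L : ℝ)⁻¹) ^ (j.val + 1) * colQ d L f (j.val + 1) x := by
      intro j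
      rw [stepFlow_div_j hL hx j, pow_succ]
      ring
    rw [Finset.sum_congr rfl (fun j _ => key j)]
    rw [Fin.sum_univ_eq_sum_range
      (fun t => ((L : ℝ)⁻¹) ^ t * colQ d L f t x - ((L : ℝ)⁻¹) ^ (t + 1) * colQ d L f (t + 1) x)]
    rw [Finset.sum_range_sub' (fun t => ((L : ℝ)⁻¹) ^ t * colQ d L f t x)]
    have hQ0 : colQ d L f 0 x = f x := by
      unfold colQ colQF
      have : (box d L).filter (fun y => ∀ i : Fin d, 0 ≤ i.val → y i = x i) = {x} := by
        ext y
        simp only [Finset.mem_filter, Finset.mem_singleton]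
        constructor
        · rintro ⟨_, hc⟩
          funext i
          exact hc i (Nat.zero_le _)
        · rintro rfl
          exact ⟨hx, fun i _ => rfl⟩
      rw [this, Finset.sum_singleton]
    have hQd : colQ d L f d x = 0 := by
      unfold colQ colQF
      have : (box d L).filter (fun y => ∀ i : Fin d, d ≤ i.val → y i = x i) = box d L := by
        apply Finset.filter_true_of_mem
        intro y _ i hi
        exact absurd i.isLt (by omega)
      rw [this, hsum]
    rw [hQ0, hQd]
    simp
  · have h0 : ∀ j : Fin d, stepFlow d L f j x = 0 := by
      intro j
      rw [stepFlow, if_neg]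
      rintro ⟨hb, _⟩
      exact hx hb
    have h0' : ∀ j : Fin d, stepFlow d L f j (x - unitZ d j) = 0 := by
      intro j
      rw [stepFlow, if_neg]
      rintro ⟨hb, hc⟩
      apply hx
      rw [mem_box] at hb ⊢
      intro i
      have hbj := hb j
      have hbi := hb i
      have hxj : (x - unitZ d j) j = x j - 1 := by simp [unitZ]
      by_cases hij : i = j
      · subst hij
        rw [hxj] at hbj
        omega
      · have : (x - unitZ d j) i = x i := by simp [unitZ, hij]
        rw [this] at hbi
        exact hbi
    rw [Finset.sum_congr rfl (fun j _ => by rw [h0 j, h0' j, sub_zero])]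
    rw [hsupp x hx]
    simp

end Div

section Bounds

variable {d L : ℕ} {f : (Fin d → ℤ) → ℝ}

lemma card_colQF {t : ℕ} (ht : t ≤ d) (x : Fin d → ℤ) :
    (colQF d L t x).card ≤ L ^ t := by
  classical
  have key := Finset.card_le_card_of_injOn
    (f := fun (y : Fin d → ℤ) (i : Fin t) => y (Fin.castLE ht i))
    (s := colQF d L t x)
    (t := Fintype.piFinset fun _ : Fin t => Finset.Ico (0 : ℤ) (L : ℤ))
    ?_ ?_
  · calc (colQF d L t x).card
        ≤ (Fintype.piFinset fun _ : Fin t => Finset.Ico (0 : ℤ) (L : ℤ)).card := key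
      _ = L ^ t := by simp [Fintype.card_piFinset]
  · intro y hy
    rw [Finset.mem_coe, Fintype.mem_piFinset]
    intro i
    simp only [Finset.mem_coe, colQF, Finset.mem_filter] at hy
    have := mem_box.mp hy.1 (Fin.castLE ht i)
    rw [Finset.mem_Ico]
    exact this
  · intro y hy y' hy' h
    simp only [Finset.mem_coe, colQF, Finset.mem_filter] at hy hy'
    funext i
    by_cases hi : t ≤ i.val
    · rw [hy.2 i hi, hy'.2 i hi]
    · have hlt : i.val < t := by omega
      have := congrFun h ⟨i.val, hlt⟩
      simpa using this

lemma abs_colQ_le {t : ℕ} (ht : t ≤ d) {ε : ℝ} (hf : ∀ y, |f y| ≤ ε) (x : Fin d → ℤ) :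
    |colQ d L f t x| ≤ ε * (L : ℝ) ^ t := by
  calc |colQ d L f t x| ≤ ∑ y ∈ colQF d L t x, |f y| := Finset.abs_sum_le_sum_abs _ _
    _ ≤ ∑ y ∈ colQF d L t x, ε := Finset.sum_le_sum (fun y _ => hf y)
    _ = (colQF d L t x).card * ε := by rw [Finset.sum_const, nsmul_eq_mul]
    _ ≤ (L : ℝ) ^ t * ε := by
        have hε : 0 ≤ ε := le_trans (abs_nonneg _) (hf x)
        have := card_colQF (L := L) ht x
        have hc : ((colQF d L t x).card : ℝ) ≤ (L : ℝ) ^ t := by exact_mod_cast this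
        exact mul_le_mul_of_nonneg_right hc hε
    _ = ε * (L : ℝ) ^ t := mul_comm _ _

lemma abs_colA_le {j : Fin d} {ε : ℝ} (hf : ∀ y, |f y| ≤ ε) (x : Fin d → ℤ) :
    |colA d L f j x| ≤ ε * (L : ℝ) ^ (j.val + 1) := by
  calc |colA d L f j x| ≤ ∑ y ∈ colAF d L j x, |f y| := Finset.abs_sum_le_sum_abs _ _
    _ ≤ ∑ y ∈ colQF d L (j.val + 1) x, |f y| := by
        apply Finset.sum_le_sum_of_subset_of_nonneg (Finset.filter_subset _ _)
        intro y _ _; exact abs_nonneg _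
    _ ≤ ∑ y ∈ colQF d L (j.val + 1) x, ε := Finset.sum_le_sum (fun y _ => hf y)
    _ = (colQF d L (j.val + 1) x).card * ε := by rw [Finset.sum_const, nsmul_eq_mul]
    _ ≤ (L : ℝ) ^ (j.val + 1) * ε := by
        have hε : 0 ≤ ε := le_trans (abs_nonneg _) (hf x)
        have := card_colQF (L := L) (t := j.val + 1) (by omega : j.val + 1 ≤ d) x
        have hc : ((colQF d L (j.val + 1) x).card : ℝ) ≤ (L : ℝ) ^ (j.val + 1) := by
          exact_mod_cast this
        exact mul_le_mul_of_nonneg_right hc hε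
    _ = ε * (L : ℝ) ^ (j.val + 1) := mul_comm _ _

lemma abs_stepFlow_le (hL : 1 ≤ L) {ε : ℝ} (hf : ∀ y, |f y| ≤ ε) (j : Fin d)
    (x : Fin d → ℤ) : |stepFlow d L f j x| ≤ 2 * ε * (L : ℝ) := by
  have hε : 0 ≤ ε := le_trans (abs_nonneg _) (hf x)
  have hLR : (0 : ℝ) < (L : ℝ) := by positivity
  rw [stepFlow]
  split
  · rename_i hc
    obtain ⟨hxb, hxj⟩ := hc
    have hb := (mem_box.mp hxb) j
    have ht : |((x j + 1 : ℤ) : ℝ) / (L : ℝ)| ≤ 1 := by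
      rw [abs_div, abs_of_pos hLR, div_le_one hLR]
      rw [abs_of_nonneg (by exact_mod_cast (by omega : (0:ℤ) ≤ x j + 1) : (0:ℝ) ≤ ((x j + 1 : ℤ) : ℝ))]
      exact_mod_cast (by omega : x j + 1 ≤ (L : ℤ))
    have hA := abs_colA_le (L := L) (j := j) hf x
    have hQ := abs_colQ_le (L := L) (t := j.val + 1) (by omega : j.val + 1 ≤ d) hf x
    calc |((L : ℝ)⁻¹) ^ j.val *
          (colA d L f j x - ((x j + 1 : ℤ) : ℝ) / (L : ℝ) * colQ d L f (j.val + 1) x)|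
        = ((L : ℝ)⁻¹) ^ j.val *
            |colA d L f j x - ((x j + 1 : ℤ) : ℝ) / (L : ℝ) * colQ d L f (j.val + 1) x| := by
          rw [abs_mul, abs_of_nonneg (by positivity : (0:ℝ) ≤ ((L : ℝ)⁻¹) ^ j.val)]
      _ ≤ ((L : ℝ)⁻¹) ^ j.val * (ε * (L : ℝ) ^ (j.val + 1) + 1 * (ε * (L : ℝ) ^ (j.val + 1))) := by
          apply mul_le_mul_of_nonneg_left _ (by positivity)
          calc |colA d L f j x - ((x j + 1 : ℤ) : ℝ) / (L : ℝ) * colQ d L f (j.val + 1) x|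
              ≤ |colA d L f j x| + |((x j + 1 : ℤ) : ℝ) / (L : ℝ)| * |colQ d L f (j.val + 1) x| := by
                rw [← abs_mul]; exact abs_sub _ _
            _ ≤ ε * (L : ℝ) ^ (j.val + 1) + 1 * (ε * (L : ℝ) ^ (j.val + 1)) := by
                apply add_le_add hA
                exact mul_le_mul ht hQ (abs_nonneg _) zero_le_one
      _ = 2 * ε * (L : ℝ) := by
          rw [one_mul, ← two_mul, pow_succ]
          field_simp
          ring_nf
          rw [← mul_pow, mul_inv_cancel₀ hLR.ne', one_pow, one_mul]
  · rw [abs_zero]; positivity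

lemma abs_stepFlow_le' (hL : 1 ≤ L) (j : Fin d) (x : Fin d → ℤ) :
    |stepFlow d L f j x| ≤ 2 * ∑ y ∈ box d L, |f y| := by
  have hS : (0:ℝ) ≤ ∑ y ∈ box d L, |f y| := Finset.sum_nonneg fun y _ => abs_nonneg _
  have hLR : (1 : ℝ) ≤ (L : ℝ) := by exact_mod_cast hL
  have hsub : ∀ t (x' : Fin d → ℤ), (∑ y ∈ colQF d L t x', |f y|) ≤ ∑ y ∈ box d L, |f y| := by
    intro t x'
    apply Finset.sum_le_sum_of_subset_of_nonneg (Finset.filter_subset _ _)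
    intro y _ _; exact abs_nonneg _
  rw [stepFlow]
  split
  · rename_i hc
    obtain ⟨hxb, hxj⟩ := hc
    have hb := (mem_box.mp hxb) j
    have hcp : ((L : ℝ)⁻¹) ^ j.val ≤ 1 := by
      apply pow_le_one₀ (by positivity)
      rw [inv_le_one_iff₀]
      right; exact hLR
    have ht : |((x j + 1 : ℤ) : ℝ) / (L : ℝ)| ≤ 1 := by
      rw [abs_div, abs_of_pos (by linarith : (0:ℝ) < (L:ℝ)), div_le_one (by linarith)]
      rw [abs_of_nonneg (by exact_mod_cast (by omega : (0:ℤ) ≤ x j + 1) : (0:ℝ) ≤ ((x j + 1 : ℤ) : ℝ))]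
      exact_mod_cast (by omega : x j + 1 ≤ (L : ℤ))
    have hA : |colA d L f j x| ≤ ∑ y ∈ box d L, |f y| := by
      calc |colA d L f j x| ≤ ∑ y ∈ colAF d L j x, |f y| := Finset.abs_sum_le_sum_abs _ _
        _ ≤ ∑ y ∈ colQF d L (j.val + 1) x, |f y| := by
            apply Finset.sum_le_sum_of_subset_of_nonneg (Finset.filter_subset _ _)
            intro y _ _; exact abs_nonneg _
        _ ≤ _ := hsub _ _
    have hQ : |colQ d L f (j.val + 1) x| ≤ ∑ y ∈ box d L, |f y| :=
      le_trans (Finset.abs_sum_le_sum_abs _ _) (hsub _ _)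
    calc |((L : ℝ)⁻¹) ^ j.val *
          (colA d L f j x - ((x j + 1 : ℤ) : ℝ) / (L : ℝ) * colQ d L f (j.val + 1) x)|
        ≤ 1 * |colA d L f j x - ((x j + 1 : ℤ) : ℝ) / (L : ℝ) * colQ d L f (j.val + 1) x| := by
          rw [abs_mul]
          apply mul_le_mul_of_nonneg_right _ (abs_nonneg _)
          rw [abs_of_nonneg (by positivity : (0:ℝ) ≤ ((L : ℝ)⁻¹) ^ j.val)]
          exact hcp
      _ ≤ 1 * (∑ y ∈ box d L, |f y| + 1 * ∑ y ∈ box d L, |f y|) := by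
          apply mul_le_mul_of_nonneg_left _ zero_le_one
          calc |colA d L f j x - ((x j + 1 : ℤ) : ℝ) / (L : ℝ) * colQ d L f (j.val + 1) x|
              ≤ |colA d L f j x| + |((x j + 1 : ℤ) : ℝ) / (L : ℝ)| * |colQ d L f (j.val + 1) x| := by
                rw [← abs_mul]; exact abs_sub _ _
            _ ≤ _ := add_le_add hA (mul_le_mul ht hQ (abs_nonneg _) zero_le_one)
      _ = 2 * ∑ y ∈ box d L, |f y| := by ring
  · rw [abs_zero]; linarith

end Bounds

section Assembly

/-- number of scales -/
def Kv (d ℓ : ℕ) : ℕ := if d = 1 then 0 else Nat.clog 2 ℓ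

noncomputable def muv (d ℓ : ℕ) (k : ℕ) : (Fin d → ℤ) → ℝ :=
  if k ≤ Kv d ℓ then mker d (2 ^ k) else m2ker d ℓ

noncomputable def fstep (d ℓ : ℕ) (k : ℕ) : (Fin d → ℤ) → ℝ :=
  fun x => muv d ℓ k x - muv d ℓ (k + 1) x

def Lstep (d ℓ : ℕ) (k : ℕ) : ℕ := if k < Kv d ℓ then 2 ^ (k + 1) else 2 * ℓ - 1

noncomputable def phiT (d ℓ : ℕ) (j : Fin d) (x : Fin d → ℤ) : ℝ :=
  ∑ k ∈ Finset.range (Kv d ℓ + 1), stepFlow d (Lstep d ℓ k) (fstep d ℓ k) j x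

noncomputable def PhiT (d ℓ : ℕ) (x y : Fin d → ℤ) : ℝ :=
  ∑ j : Fin d, ((if y = x + unitZ d j then phiT d ℓ j x else 0)
      - (if x = y + unitZ d j then phiT d ℓ j y else 0))

variable {d ℓ : ℕ}

lemma pow_Kv_le (hℓ : 1 ≤ ℓ) : 2 ^ Kv d ℓ ≤ 2 * ℓ - 1 := by
  unfold Kv
  split
  · simpa using (by omega : 1 ≤ 2 * ℓ - 1)
  · rcases Nat.lt_or_ge ℓ 2 with h | h
    · have : ℓ = 1 := by omega
      subst this
      simp [Nat.clog_one_right]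
    · have h1 : ℓ ≤ 2 ^ Nat.clog 2 ℓ := Nat.le_pow_clog (by norm_num) ℓ
      have hK1 : 1 ≤ Nat.clog 2 ℓ := by
        by_contra hc
        have : Nat.clog 2 ℓ = 0 := by omega
        rw [this] at h1
        omega
      have h2 : 2 ^ (Nat.clog 2 ℓ - 1) < ℓ := Nat.pow_pred_clog_lt_self (by norm_num) (by omega)
      have h3 : 2 ^ Nat.clog 2 ℓ = 2 * 2 ^ (Nat.clog 2 ℓ - 1) := by
        rw [← pow_succ']
        congr 1
        omega
      omega

lemma le_pow_Kv (hd : d ≠ 1) : ℓ ≤ 2 ^ Kv d ℓ := by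
  unfold Kv
  rw [if_neg hd]
  exact Nat.le_pow_clog (by norm_num) ℓ

lemma Lstep_pos (hℓ : 1 ≤ ℓ) (k : ℕ) : 1 ≤ Lstep d ℓ k := by
  unfold Lstep; split
  · exact Nat.one_le_two_pow
  · omega

lemma Lstep_le (hℓ : 1 ≤ ℓ) {k : ℕ} (hk : k ≤ Kv d ℓ) : Lstep d ℓ k ≤ 2 * ℓ - 1 := by
  unfold Lstep
  split
  · calc 2 ^ (k + 1) ≤ 2 ^ Kv d ℓ := Nat.pow_le_pow_right (by norm_num) (by omega)
      _ ≤ 2 * ℓ - 1 := pow_Kv_le hℓ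
  · exact le_rfl

lemma Lstep_le_pow (hd : d ≠ 1) (hℓ : 1 ≤ ℓ) (k : ℕ) : Lstep d ℓ k ≤ 2 ^ (k + 1) := by
  unfold Lstep
  split
  · exact le_rfl
  · rename_i h
    have h1 : ℓ ≤ 2 ^ Kv d ℓ := le_pow_Kv hd
    have h2 : 2 ^ Kv d ℓ ≤ 2 ^ k := Nat.pow_le_pow_right (by norm_num) (by omega)
    have : 2 ^ (k + 1) = 2 * 2 ^ k := by rw [pow_succ']
    omega

lemma pow_le_Lstep (hℓ : 1 ≤ ℓ) {k : ℕ} (hk : k ≤ Kv d ℓ) : 2 ^ k ≤ Lstep d ℓ k := by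
  unfold Lstep
  split
  · exact Nat.pow_le_pow_right (by norm_num) (by omega)
  · calc 2 ^ k ≤ 2 ^ Kv d ℓ := Nat.pow_le_pow_right (by norm_num) hk
      _ ≤ 2 * ℓ - 1 := pow_Kv_le hℓ

lemma fstep_supp (hℓ : 1 ≤ ℓ) {k : ℕ} (hk : k ≤ Kv d ℓ) :
    ∀ y, y ∉ box d (Lstep d ℓ k) → fstep d ℓ k y = 0 := by
  intro y hy
  unfold fstep muv
  rw [if_pos hk]
  have h1 : mker d (2 ^ k) y = 0 := by
    apply mker_eq_zero
    intro hc
    exact hy (box_mono (pow_le_Lstep hℓ hk) hc)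
  rw [h1]
  split
  · rename_i h
    -- k + 1 ≤ Kv, so k < Kv and Lstep = 2^(k+1)
    have hL : Lstep d ℓ k = 2 ^ (k + 1) := by unfold Lstep; rw [if_pos (by omega)]
    rw [hL] at hy
    rw [mker_eq_zero hy]
    ring
  · rename_i h
    -- k = Kv, Lstep = 2ℓ - 1
    have hL : Lstep d ℓ k = 2 * ℓ - 1 := by unfold Lstep; rw [if_neg (by omega)]
    rw [hL] at hy
    rw [m2ker_eq_zero hy]
    ring

lemma fstep_sum (hℓ : 1 ≤ ℓ) {k : ℕ} (hk : k ≤ Kv d ℓ) :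
    ∑ y ∈ box d (Lstep d ℓ k), fstep d ℓ k y = 0 := by
  unfold fstep
  rw [Finset.sum_sub_distrib]
  have h1 : ∑ y ∈ box d (Lstep d ℓ k), muv d ℓ k y = 1 := by
    unfold muv
    rw [if_pos hk]
    exact sum_mker (Nat.one_le_two_pow) (box_mono (pow_le_Lstep hℓ hk))
  have h2 : ∑ y ∈ box d (Lstep d ℓ k), muv d ℓ (k + 1) y = 1 := by
    unfold muv
    split
    · rename_i h
      have hL : Lstep d ℓ k = 2 ^ (k + 1) := by unfold Lstep; rw [if_pos (by omega)]
      rw [hL]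
      exact sum_mker (Nat.one_le_two_pow) subset_rfl
    · rename_i h
      have hL : Lstep d ℓ k = 2 * ℓ - 1 := by unfold Lstep; rw [if_neg (by omega)]
      rw [hL]
      exact sum_m2ker hℓ
  rw [h1, h2, sub_self]

lemma phiT_div (hℓ : 1 ≤ ℓ) (x : Fin d → ℤ) :
    ∑ j : Fin d, (phiT d ℓ j x - phiT d ℓ j (x - unitZ d j))
      = (if x = 0 then (1:ℝ) else 0) - m2ker d ℓ x := by
  unfold phiT
  have : ∀ j : Fin d,
      (∑ k ∈ Finset.range (Kv d ℓ + 1), stepFlow d (Lstep d ℓ k) (fstep d ℓ k) j x)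
        - ∑ k ∈ Finset.range (Kv d ℓ + 1), stepFlow d (Lstep d ℓ k) (fstep d ℓ k) j (x - unitZ d j)
      = ∑ k ∈ Finset.range (Kv d ℓ + 1),
          (stepFlow d (Lstep d ℓ k) (fstep d ℓ k) j x
            - stepFlow d (Lstep d ℓ k) (fstep d ℓ k) j (x - unitZ d j)) := by
    intro j
    rw [Finset.sum_sub_distrib]
  rw [Finset.sum_congr rfl (fun j _ => this j), Finset.sum_comm]
  have hstep : ∀ k ∈ Finset.range (Kv d ℓ + 1),
      ∑ j : Fin d, (stepFlow d (Lstep d ℓ k) (fstep d ℓ k) j x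
        - stepFlow d (Lstep d ℓ k) (fstep d ℓ k) j (x - unitZ d j)) = fstep d ℓ k x := by
    intro k hk
    rw [Finset.mem_range] at hk
    exact stepFlow_div (Lstep_pos hℓ k) (fstep_supp hℓ (by omega)) (fstep_sum hℓ (by omega)) x
  rw [Finset.sum_congr rfl hstep]
  unfold fstep
  rw [Finset.sum_range_sub' (fun k => muv d ℓ k x)]
  have hm0 : muv d ℓ 0 x = if x = 0 then (1:ℝ) else 0 := by
    unfold muv
    rw [if_pos (Nat.zero_le _), pow_zero]
    unfold mker
    rw [box_one]
    simp
  have hmK : muv d ℓ (Kv d ℓ + 1) x = m2ker d ℓ x := by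
    unfold muv
    rw [if_neg (by omega)]
  rw [hm0, hmK]

end Assembly

section PhiProps

variable {d ℓ : ℕ}

lemma PhiT_antisymm (x y : Fin d → ℤ) : PhiT d ℓ x y = -PhiT d ℓ y x := by
  unfold PhiT
  rw [← Finset.sum_neg_distrib]
  apply Finset.sum_congr rfl
  intro j _
  rw [neg_sub]

lemma phiT_eq_zero (hℓ : 1 ≤ ℓ) {j : Fin d} {x : Fin d → ℤ}
    (h : x ∉ box d (2 * ℓ - 1) ∨ x + unitZ d j ∉ box d (2 * ℓ - 1)) :
    phiT d ℓ j x = 0 := by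
  unfold phiT
  apply Finset.sum_eq_zero
  intro k hk
  rw [Finset.mem_range] at hk
  by_contra hc
  have hmem := stepFlow_ne_zero hc
  have hsub : box d (Lstep d ℓ k) ⊆ box d (2 * ℓ - 1) := box_mono (Lstep_le hℓ (by omega))
  rcases h with h | h
  · exact h (hsub hmem.1)
  · exact h (hsub hmem.2)

lemma norm1_unitZ (j : Fin d) : norm1 (unitZ d j) = 1 := by
  unfold norm1 unitZ
  rw [Finset.sum_eq_single j]
  · simp
  · intro i _ hij
    simp [hij]
  · intro h
    exact absurd (Finset.mem_univ j) h

lemma norm1_neg (z : Fin d → ℤ) : norm1 (-z) = norm1 z := by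
  unfold norm1
  apply Finset.sum_congr rfl
  intro i _
  simp

lemma unitZ_apply_self (j : Fin d) : unitZ d j j = 1 := by simp [unitZ]

lemma PhiT_support (hℓ : 1 ≤ ℓ) (x y : Fin d → ℤ)
    (h : norm1 (y - x) ≠ 1 ∨ x ∉ box d (2 * ℓ - 1) ∨ y ∉ box d (2 * ℓ - 1)) :
    PhiT d ℓ x y = 0 := by
  unfold PhiT
  apply Finset.sum_eq_zero
  intro j _
  rcases h with h | h | h
  · rw [if_neg, if_neg, sub_zero]
    · intro hc
      apply h
      rw [hc]
      have : y - (y + unitZ d j) = -(unitZ d j) := by ring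
      rw [this, norm1_neg, norm1_unitZ]
    · intro hc
      apply h
      rw [hc]
      have : x + unitZ d j - x = unitZ d j := by ring
      rw [this, norm1_unitZ]
  · have h1 : phiT d ℓ j x = 0 := phiT_eq_zero hℓ (Or.inl h)
    have h2 : ∀ hc : x = y + unitZ d j, phiT d ℓ j y = 0 := by
      intro hc
      apply phiT_eq_zero hℓ
      right
      rw [← hc]
      exact h
    split <;> split <;> rename_i c1 c2 <;> simp [h1]
    · rw [h2 c2]
    · rw [h2 c2]
  · have h2 : ∀ hc : y = x + unitZ d j, phiT d ℓ j x = 0 := by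
      intro hc
      apply phiT_eq_zero hℓ
      right
      rw [← hc]
      exact h
    have h1 : phiT d ℓ j y = 0 := phiT_eq_zero hℓ (Or.inl h)
    split <;> split <;> rename_i c1 c2 <;> simp [h1]
    · rw [h2 c1]
    · rw [h2 c1]

lemma PhiT_right (x : Fin d → ℤ) (j : Fin d) :
    PhiT d ℓ x (x + unitZ d j) = phiT d ℓ j x := by
  unfold PhiT
  rw [Finset.sum_eq_single j]
  · rw [if_pos rfl, if_neg, sub_zero]
    intro hc
    have := congrFun hc j
    simp only [Pi.add_apply, unitZ_apply_self] at this
    omega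
  · intro i _ hij
    rw [if_neg, if_neg, sub_zero]
    · intro hc
      have := congrFun hc i
      simp only [Pi.add_apply, unitZ] at this
      have hji : ¬ (i = j) := fun e => hij e
      simp [hji] at this
    · intro hc
      have := congrFun hc j
      simp only [Pi.add_apply, unitZ] at this
      by_cases hji : j = i
      · exact hij hji.symm
      · simp [hji] at this
  · intro h
    exact absurd (Finset.mem_univ j) h

lemma PhiT_left (x : Fin d → ℤ) (j : Fin d) :
    PhiT d ℓ x (x - unitZ d j) = -phiT d ℓ j (x - unitZ d j) := by
  unfold PhiT
  rw [Finset.sum_eq_single j]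
  · rw [if_neg, if_pos (by ring), zero_sub]
    intro hc
    have := congrFun hc j
    simp only [Pi.sub_apply, Pi.add_apply, unitZ_apply_self] at this
    omega
  · intro i _ hij
    rw [if_neg, if_neg, sub_zero]
    · intro hc
      have := congrFun hc i
      simp only [Pi.sub_apply, Pi.add_apply, unitZ] at this
      have hji : ¬ (i = j) := fun e => hij e
      by_cases hij2 : j = i
      · exact hij hij2.symm
      · simp [hji, hij2] at this
    · intro hc
      have := congrFun hc j
      simp only [Pi.sub_apply, Pi.add_apply, unitZ] at this
      by_cases hji : j = i
      · exact hij hji.symm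
      · simp [hji] at this
  · intro h
    exact absurd (Finset.mem_univ j) h

lemma PhiT_div (hℓ : 1 ≤ ℓ) (x : Fin d → ℤ) :
    ∑ j : Fin d, (PhiT d ℓ x (x + unitZ d j) + PhiT d ℓ x (x - unitZ d j))
      = (if x = 0 then (1:ℝ) else 0) - m2ker d ℓ x := by
  have : ∀ j : Fin d, PhiT d ℓ x (x + unitZ d j) + PhiT d ℓ x (x - unitZ d j)
      = phiT d ℓ j x - phiT d ℓ j (x - unitZ d j) := by
    intro j
    rw [PhiT_right, PhiT_left]
    ring
  rw [Finset.sum_congr rfl (fun j _ => this j)]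
  exact phiT_div hℓ x

end PhiProps

section Quant

variable {d ℓ : ℕ}

lemma mker_pow_le (k : ℕ) (y : Fin d → ℤ) :
    mker d (2 ^ k) y ≤ (((2:ℝ)^d)⁻¹) ^ k := by
  have h := mker_le (d := d) (s := 2 ^ k) y
  have e : (((2 ^ k : ℕ) : ℝ) ^ d)⁻¹ = (((2:ℝ)^d)⁻¹) ^ k := by
    push_cast
    rw [inv_pow, ← pow_mul, ← pow_mul, Nat.mul_comm k d]
  rwa [e] at h

lemma m2ker_le_pow (hℓ : 1 ≤ ℓ) (y : Fin d → ℤ) :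
    m2ker d ℓ y ≤ (2:ℝ)^d * (((2:ℝ)^d)⁻¹) ^ (Kv d ℓ) := by
  have h1 := m2ker_le hℓ y
  have h2 : ((2:ℝ) ^ Kv d ℓ) ≤ 2 * (ℓ:ℝ) := by
    have := pow_Kv_le (d := d) hℓ
    have h3 : (2:ℕ) ^ Kv d ℓ ≤ 2 * ℓ := by omega
    exact_mod_cast h3
  have hl0 : (0:ℝ) < (ℓ:ℝ) := by exact_mod_cast hℓ
  have h4 : ((2:ℝ) ^ Kv d ℓ) ^ d ≤ (2:ℝ)^d * (ℓ:ℝ)^d := by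
    rw [← mul_pow]
    exact pow_le_pow_left₀ (by positivity) h2 d
  have e2 : (((2:ℝ)^d)⁻¹) ^ Kv d ℓ = (((2:ℝ) ^ Kv d ℓ) ^ d)⁻¹ := by
    rw [inv_pow, ← pow_mul, ← pow_mul, Nat.mul_comm]
  have h5 : ((ℓ:ℝ)^d)⁻¹ ≤ (2:ℝ)^d * (((2:ℝ)^d)⁻¹) ^ (Kv d ℓ) := by
    rw [e2]
    calc ((ℓ:ℝ)^d)⁻¹ = (2:ℝ)^d * ((2:ℝ)^d * (ℓ:ℝ)^d)⁻¹ := by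
          rw [mul_inv, ← mul_assoc, mul_inv_cancel₀ (by positivity), one_mul]
      _ ≤ (2:ℝ)^d * (((2:ℝ) ^ Kv d ℓ) ^ d)⁻¹ := by
          apply mul_le_mul_of_nonneg_left _ (by positivity)
          apply inv_anti₀ (by positivity)
          exact h4
  exact le_trans h1 h5

lemma fstep_abs (hℓ : 1 ≤ ℓ) {k : ℕ} (hk : k ≤ Kv d ℓ) (y : Fin d → ℤ) :
    |fstep d ℓ k y| ≤ (2:ℝ)^(d+1) * (((2:ℝ)^d)⁻¹) ^ k := by
  have hr : (0:ℝ) < ((2:ℝ)^d)⁻¹ := by positivity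
  have hr1 : ((2:ℝ)^d)⁻¹ ≤ 1 := by
    rw [inv_le_one_iff₀]; right; exact one_le_pow₀ (by norm_num)
  have h1 : muv d ℓ k y ≤ (((2:ℝ)^d)⁻¹) ^ k := by
    unfold muv; rw [if_pos hk]; exact mker_pow_le k y
  have h2 : muv d ℓ (k+1) y ≤ (2:ℝ)^d * (((2:ℝ)^d)⁻¹) ^ k := by
    unfold muv
    split
    · calc mker d (2 ^ (k+1)) y ≤ (((2:ℝ)^d)⁻¹) ^ (k+1) := mker_pow_le (k+1) y
        _ ≤ (((2:ℝ)^d)⁻¹) ^ k := by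
            apply pow_le_pow_of_le_one (le_of_lt hr) hr1
            omega
        _ ≤ (2:ℝ)^d * (((2:ℝ)^d)⁻¹) ^ k := by
            nth_rewrite 1 [← one_mul ((((2:ℝ)^d)⁻¹) ^ k)]
            apply mul_le_mul_of_nonneg_right _ (by positivity)
            exact one_le_pow₀ (by norm_num)
    · rename_i h
      have hkK : k = Kv d ℓ := by omega
      subst hkK
      exact m2ker_le_pow hℓ y
  have h0a : 0 ≤ muv d ℓ k y := by
    by_cases h : k ≤ Kv d ℓ <;> simp [muv, h, mker_nonneg, m2ker_nonneg]
  have h0b : 0 ≤ muv d ℓ (k+1) y := by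
    by_cases h : k + 1 ≤ Kv d ℓ <;> simp [muv, h, mker_nonneg, m2ker_nonneg]
  have h0 : 0 ≤ muv d ℓ k y ∧ 0 ≤ muv d ℓ (k+1) y := ⟨h0a, h0b⟩
  unfold fstep
  rw [abs_sub_comm]
  calc |muv d ℓ (k+1) y - muv d ℓ k y| ≤ max (muv d ℓ (k+1) y) (muv d ℓ k y) := by
        rw [abs_sub_le_iff]
        constructor
        · have := h0.1; have := le_max_left (muv d ℓ (k+1) y) (muv d ℓ k y); linarith
        · have := h0.2; have := le_max_right (muv d ℓ (k+1) y) (muv d ℓ k y); linarith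
    _ ≤ (2:ℝ)^d * (((2:ℝ)^d)⁻¹) ^ k := by
        apply max_le h2
        calc muv d ℓ k y ≤ (((2:ℝ)^d)⁻¹) ^ k := h1
          _ ≤ (2:ℝ)^d * (((2:ℝ)^d)⁻¹) ^ k := by
              nth_rewrite 1 [← one_mul ((((2:ℝ)^d)⁻¹) ^ k)]
              apply mul_le_mul_of_nonneg_right _ (by positivity)
              exact one_le_pow₀ (by norm_num)
    _ ≤ (2:ℝ)^(d+1) * (((2:ℝ)^d)⁻¹) ^ k := by
        apply mul_le_mul_of_nonneg_right _ (by positivity)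
        apply pow_le_pow_right₀ (by norm_num)
        omega

end Quant

section Quant2

variable {d ℓ : ℕ}

lemma step_abs (hd2 : 2 ≤ d) (hℓ : 1 ≤ ℓ) {k : ℕ} (hk : k ≤ Kv d ℓ) (j : Fin d)
    (x : Fin d → ℤ) :
    |stepFlow d (Lstep d ℓ k) (fstep d ℓ k) j x|
      ≤ (2:ℝ)^(d+3) * (((2:ℝ)^(d-1))⁻¹) ^ k := by
  obtain ⟨d', rfl⟩ : ∃ d', d = d' + 2 := ⟨d - 2, by omega⟩
  have hL1 : 1 ≤ Lstep (d' + 2) ℓ k := Lstep_pos hℓ k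
  have hb := abs_stepFlow_le (f := fstep (d' + 2) ℓ k) hL1 (fun y => fstep_abs hℓ hk y) j x
  have hLle : ((Lstep (d' + 2) ℓ k : ℕ) : ℝ) ≤ (2:ℝ)^(k+1) := by
    have := Lstep_le_pow (d := d'+2) (by omega) hℓ k
    exact_mod_cast this
  have hε : (0:ℝ) ≤ (2:ℝ)^((d'+2)+1) * (((2:ℝ)^(d'+2))⁻¹) ^ k := by positivity
  have hb2 : |stepFlow (d'+2) (Lstep (d' + 2) ℓ k) (fstep (d' + 2) ℓ k) j x|
      ≤ 2 * ((2:ℝ)^((d'+2)+1) * (((2:ℝ)^(d'+2))⁻¹) ^ k) * (2:ℝ)^(k+1) := by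
    calc |stepFlow (d'+2) (Lstep (d' + 2) ℓ k) (fstep (d' + 2) ℓ k) j x|
        ≤ 2 * ((2:ℝ)^((d'+2)+1) * (((2:ℝ)^(d'+2))⁻¹) ^ k) * ((Lstep (d' + 2) ℓ k : ℕ) : ℝ) := hb
      _ ≤ 2 * ((2:ℝ)^((d'+2)+1) * (((2:ℝ)^(d'+2))⁻¹) ^ k) * (2:ℝ)^(k+1) := by
          apply mul_le_mul_of_nonneg_left hLle (by positivity)
  have heq : 2 * ((2:ℝ)^((d'+2)+1) * (((2:ℝ)^(d'+2))⁻¹) ^ k) * (2:ℝ)^(k+1)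
      = (2:ℝ)^((d'+2)+3) * (((2:ℝ)^((d'+2)-1))⁻¹) ^ k := by
    have e1 : ((((2:ℝ)^(d'+2))⁻¹) ^ k) = ((2:ℝ)^((d'+2)*k))⁻¹ := by rw [inv_pow, ← pow_mul]
    have e2 : ((((2:ℝ)^((d'+2)-1))⁻¹) ^ k) = ((2:ℝ)^(((d'+2)-1)*k))⁻¹ := by rw [inv_pow, ← pow_mul]
    rw [e1, e2]
    have e3 : (d'+2) * k = ((d'+2)-1) * k + k := by
      have h4 : (d'+2) - 1 = d' + 1 := by omega
      rw [h4]; ring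
    rw [e3, pow_add]
    have h1 : ((2:ℝ)^(((d'+2)-1)*k)) ≠ 0 := by positivity
    have h2 : ((2:ℝ)^k) ≠ 0 := by positivity
    field_simp
    ring
  rw [heq] at hb2
  exact hb2

lemma step_sum_abs (hd2 : 2 ≤ d) (hℓ : 1 ≤ ℓ) {k : ℕ} (hk : k ≤ Kv d ℓ) (j : Fin d) :
    ∑ x ∈ box d (2 * ℓ - 1), |stepFlow d (Lstep d ℓ k) (fstep d ℓ k) j x|
      ≤ (2:ℝ)^(d+3) * (((2:ℝ)^(d-1))⁻¹) ^ k * (2:ℝ)^((k+1)*d) := by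
  have hzero : ∀ x ∈ box d (2 * ℓ - 1), x ∉ box d (Lstep d ℓ k) →
      |stepFlow d (Lstep d ℓ k) (fstep d ℓ k) j x| = 0 := by
    intro x _ hx
    rw [abs_eq_zero]
    by_contra hc
    exact hx (stepFlow_ne_zero hc).1
  rw [← Finset.sum_subset (box_mono (Lstep_le hℓ hk)) hzero]
  calc ∑ x ∈ box d (Lstep d ℓ k), |stepFlow d (Lstep d ℓ k) (fstep d ℓ k) j x|
      ≤ ∑ x ∈ box d (Lstep d ℓ k), (2:ℝ)^(d+3) * (((2:ℝ)^(d-1))⁻¹) ^ k :=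
        Finset.sum_le_sum (fun x _ => step_abs hd2 hℓ hk j x)
    _ = ((box d (Lstep d ℓ k)).card : ℝ) * ((2:ℝ)^(d+3) * (((2:ℝ)^(d-1))⁻¹) ^ k) := by
        rw [Finset.sum_const, nsmul_eq_mul]
    _ ≤ (2:ℝ)^((k+1)*d) * ((2:ℝ)^(d+3) * (((2:ℝ)^(d-1))⁻¹) ^ k) := by
        apply mul_le_mul_of_nonneg_right _ (by positivity)
        rw [card_box]
        have h1 : Lstep d ℓ k ^ d ≤ (2:ℕ)^((k+1)*d) := by
          rw [pow_mul]
          exact Nat.pow_le_pow_left (Lstep_le_pow (by omega) hℓ k) d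
        exact_mod_cast h1
    _ = (2:ℝ)^(d+3) * (((2:ℝ)^(d-1))⁻¹) ^ k * (2:ℝ)^((k+1)*d) := by ring

lemma geom_sum_le_two {r : ℝ} (h0 : 0 ≤ r) (h : r ≤ 1/2) (n : ℕ) :
    ∑ i ∈ Finset.range n, r ^ i ≤ 2 := by
  calc ∑ i ∈ Finset.range n, r ^ i ≤ ∑ i ∈ Finset.range n, (1/2:ℝ) ^ i := by
        apply Finset.sum_le_sum
        intro i _
        exact pow_le_pow_left₀ h0 h i
    _ ≤ 2 := sum_geometric_two_le n

lemma geom_tail_le {r : ℝ} (h0 : 0 ≤ r) (h : r ≤ 1/2) (k n : ℕ) :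
    ∑ k' ∈ Finset.range n, (if k ≤ k' then r ^ k' else 0) ≤ 2 * r ^ k := by
  rcases le_or_gt n k with hn | hn
  · have : ∀ k' ∈ Finset.range n, (if k ≤ k' then r ^ k' else 0) = 0 := by
      intro k' hk'
      rw [Finset.mem_range] at hk'
      rw [if_neg (by omega)]
    rw [Finset.sum_congr rfl this]
    simp
    positivity
  · have hfilter : ∑ k' ∈ Finset.range n, (if k ≤ k' then r ^ k' else 0)
        = ∑ k' ∈ Finset.Ico k n, r ^ k' := by
      rw [← Finset.sum_filter]
      congr 1
      ext a
      simp only [Finset.mem_filter, Finset.mem_range, Finset.mem_Ico]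
      omega
    rw [hfilter, Finset.sum_Ico_eq_sum_range]
    have : ∀ i ∈ Finset.range (n - k), r ^ (k + i) = r ^ k * r ^ i := by
      intro i _
      rw [pow_add]
    rw [Finset.sum_congr rfl this, ← Finset.mul_sum]
    calc r ^ k * ∑ i ∈ Finset.range (n - k), r ^ i ≤ r ^ k * 2 := by
          apply mul_le_mul_of_nonneg_left (geom_sum_le_two h0 h _) (by positivity)
      _ = 2 * r ^ k := by ring

end Quant2

section Quant3

lemma sum_swap3 {α β γ : Type*} (s : Finset α) (t : Finset β) (u : Finset γ)
    (f : α → β → γ → ℝ) :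
    ∑ a ∈ s, ∑ b ∈ t, ∑ c ∈ u, f a b c = ∑ c ∈ u, ∑ a ∈ s, ∑ b ∈ t, f a b c := by
  calc ∑ a ∈ s, ∑ b ∈ t, ∑ c ∈ u, f a b c
      = ∑ a ∈ s, ∑ c ∈ u, ∑ b ∈ t, f a b c :=
        Finset.sum_congr rfl (fun a _ => Finset.sum_comm)
    _ = ∑ c ∈ u, ∑ a ∈ s, ∑ b ∈ t, f a b c := Finset.sum_comm

variable {d ℓ : ℕ}

lemma Sq_bound (hd2 : 2 ≤ d) (hℓ : 1 ≤ ℓ) :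
    ∑ j : Fin d, ∑ x ∈ box d (2 * ℓ - 1), (phiT d ℓ j x)^2
      ≤ (d:ℝ) * 2^(3*d+8) * ∑ k ∈ Finset.range (Kv d ℓ + 1), (((2:ℝ)^(d-2))⁻¹)^k := by
  set n1 := Kv d ℓ + 1 with hn1
  set A : ℝ := (2:ℝ)^(d+3) with hA
  set r : ℝ := ((2:ℝ)^(d-1))⁻¹ with hr
  have hr0 : 0 ≤ r := by positivity
  have hr2 : r ≤ 1/2 := by
    rw [hr]
    rw [inv_le_comm₀ (by positivity) (by norm_num)]
    calc (1/2:ℝ)⁻¹ = 2^1 := by norm_num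
      _ ≤ 2^(d-1) := pow_le_pow_right₀ (by norm_num) (by omega)
  have hA0 : 0 ≤ A := by positivity
  set s : ℕ → Fin d → (Fin d → ℤ) → ℝ :=
    fun k j x => stepFlow d (Lstep d ℓ k) (fstep d ℓ k) j x with hs
  -- pointwise and summed bounds
  have habs : ∀ k ∈ Finset.range n1, ∀ (j : Fin d) (x : Fin d → ℤ),
      |s k j x| ≤ A * r^k := by
    intro k hk j x
    rw [Finset.mem_range] at hk
    exact step_abs hd2 hℓ (by omega) j x
  have hsum : ∀ k ∈ Finset.range n1, ∀ j : Fin d,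
      ∑ x ∈ box d (2 * ℓ - 1), |s k j x| ≤ A * r^k * (2:ℝ)^((k+1)*d) := by
    intro k hk j
    rw [Finset.mem_range] at hk
    exact step_sum_abs hd2 hℓ (by omega) j
  -- T
  set T : ℕ → ℕ → ℝ :=
    fun k k' => ∑ j : Fin d, ∑ x ∈ box d (2 * ℓ - 1), |s k j x| * |s k' j x| with hT
  have hTsym : ∀ k k', T k k' = T k' k := by
    intro k k'
    apply Finset.sum_congr rfl
    intro j _
    apply Finset.sum_congr rfl
    intro x _
    ring
  have hTle : ∀ k ∈ Finset.range n1, ∀ k' ∈ Finset.range n1, k ≤ k' →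
      T k k' ≤ (d:ℝ) * (2:ℝ)^((k+1)*d) * (A * r^k) * (A * r^(k')) := by
    intro k hk k' hk' hkk
    have hj : ∀ j : Fin d, ∑ x ∈ box d (2 * ℓ - 1), |s k j x| * |s k' j x|
        ≤ (2:ℝ)^((k+1)*d) * (A * r^k) * (A * r^(k')) := by
      intro j
      calc ∑ x ∈ box d (2 * ℓ - 1), |s k j x| * |s k' j x|
          ≤ ∑ x ∈ box d (2 * ℓ - 1), |s k j x| * (A * r^(k')) := by
            apply Finset.sum_le_sum
            intro x _
            exact mul_le_mul_of_nonneg_left (habs k' hk' j x) (abs_nonneg _)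
        _ = (∑ x ∈ box d (2 * ℓ - 1), |s k j x|) * (A * r^(k')) := by
            rw [Finset.sum_mul]
        _ ≤ (A * r^k * (2:ℝ)^((k+1)*d)) * (A * r^(k')) := by
            apply mul_le_mul_of_nonneg_right (hsum k hk j) (by positivity)
        _ = (2:ℝ)^((k+1)*d) * (A * r^k) * (A * r^(k')) := by ring
    calc T k k' ≤ ∑ _j : Fin d, (2:ℝ)^((k+1)*d) * (A * r^k) * (A * r^(k')) :=
          Finset.sum_le_sum (fun j _ => hj j)
      _ = (d:ℝ) * (2:ℝ)^((k+1)*d) * (A * r^k) * (A * r^(k')) := by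
          rw [Finset.sum_const, nsmul_eq_mul]
          simp
          ring
  -- step 1 : Sq ≤ ∑∑ T
  have hstep1 : ∑ j : Fin d, ∑ x ∈ box d (2 * ℓ - 1), (phiT d ℓ j x)^2
      ≤ ∑ k ∈ Finset.range n1, ∑ k' ∈ Finset.range n1, T k k' := by
    have hpt : ∀ (j : Fin d), ∀ x ∈ box d (2 * ℓ - 1), (phiT d ℓ j x)^2
        ≤ ∑ k ∈ Finset.range n1, ∑ k' ∈ Finset.range n1, |s k j x| * |s k' j x| := by
      intro j x _
      have h1 : |phiT d ℓ j x| ≤ ∑ k ∈ Finset.range n1, |s k j x| := by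
        unfold phiT
        exact Finset.abs_sum_le_sum_abs _ _
      calc (phiT d ℓ j x)^2 = |phiT d ℓ j x|^2 := (sq_abs _).symm
        _ ≤ (∑ k ∈ Finset.range n1, |s k j x|)^2 := by
            apply pow_le_pow_left₀ (abs_nonneg _) h1
        _ = ∑ k ∈ Finset.range n1, ∑ k' ∈ Finset.range n1, |s k j x| * |s k' j x| := by
            rw [sq, Finset.sum_mul_sum]
    calc ∑ j : Fin d, ∑ x ∈ box d (2 * ℓ - 1), (phiT d ℓ j x)^2
        ≤ ∑ j : Fin d, ∑ x ∈ box d (2 * ℓ - 1),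
            ∑ k ∈ Finset.range n1, ∑ k' ∈ Finset.range n1, |s k j x| * |s k' j x| :=
          Finset.sum_le_sum (fun j _ => Finset.sum_le_sum (hpt j))
      _ = ∑ k ∈ Finset.range n1, ∑ j : Fin d, ∑ x ∈ box d (2 * ℓ - 1),
            ∑ k' ∈ Finset.range n1, |s k j x| * |s k' j x| :=
          sum_swap3 _ _ _ (fun j x k => ∑ k' ∈ Finset.range n1, |s k j x| * |s k' j x|)
      _ = ∑ k ∈ Finset.range n1, ∑ k' ∈ Finset.range n1, T k k' := by
          apply Finset.sum_congr rfl
          intro k _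
          exact sum_swap3 _ _ _ (fun j x k' => |s k j x| * |s k' j x|)
  -- step 2 : U
  set U : ℕ → ℕ → ℝ :=
    fun k k' => ((d:ℝ) * (2:ℝ)^((k+1)*d) * A * A * r^k) * (if k ≤ k' then r^(k') else 0)
    with hU
  have hU0 : ∀ k k', 0 ≤ U k k' := by
    intro k k'
    apply mul_nonneg (by positivity)
    split
    · positivity
    · exact le_rfl
  have hTU : ∀ k ∈ Finset.range n1, ∀ k' ∈ Finset.range n1, T k k' ≤ U k k' + U k' k := by
    intro k hk k' hk'
    rcases le_or_gt k k' with hkk | hkk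
    · calc T k k' ≤ (d:ℝ) * (2:ℝ)^((k+1)*d) * (A * r^k) * (A * r^(k')) :=
            hTle k hk k' hk' hkk
        _ = U k k' := by rw [hU]; simp only [if_pos hkk]; ring
        _ ≤ U k k' + U k' k := le_add_of_nonneg_right (hU0 k' k)
    · calc T k k' = T k' k := hTsym k k'
        _ ≤ (d:ℝ) * (2:ℝ)^((k'+1)*d) * (A * r^(k')) * (A * r^k) :=
            hTle k' hk' k hk (by omega)
        _ = U k' k := by rw [hU]; simp only [if_pos (by omega : k' ≤ k)]; ring
        _ ≤ U k k' + U k' k := le_add_of_nonneg_left (hU0 k k')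
  have hstep2 : ∑ k ∈ Finset.range n1, ∑ k' ∈ Finset.range n1, T k k'
      ≤ 2 * ∑ k ∈ Finset.range n1, ∑ k' ∈ Finset.range n1, U k k' := by
    calc ∑ k ∈ Finset.range n1, ∑ k' ∈ Finset.range n1, T k k'
        ≤ ∑ k ∈ Finset.range n1, ∑ k' ∈ Finset.range n1, (U k k' + U k' k) :=
          Finset.sum_le_sum (fun k hk => Finset.sum_le_sum (fun k' hk' => hTU k hk k' hk'))
      _ = (∑ k ∈ Finset.range n1, ∑ k' ∈ Finset.range n1, U k k')
          + ∑ k ∈ Finset.range n1, ∑ k' ∈ Finset.range n1, U k' k := by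
          rw [← Finset.sum_add_distrib]
          apply Finset.sum_congr rfl
          intro k _
          rw [← Finset.sum_add_distrib]
      _ = 2 * ∑ k ∈ Finset.range n1, ∑ k' ∈ Finset.range n1, U k k' := by
          rw [Finset.sum_comm (f := fun k k' => U k' k)]
          ring
  -- step 3 : geometric sums
  have hstep3 : ∑ k ∈ Finset.range n1, ∑ k' ∈ Finset.range n1, U k k'
      ≤ ∑ k ∈ Finset.range n1, ((d:ℝ) * (2:ℝ)^((k+1)*d) * A * A * r^k) * (2 * r^k) := by
    apply Finset.sum_le_sum
    intro k _
    rw [← Finset.mul_sum]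
    exact mul_le_mul_of_nonneg_left (geom_tail_le hr0 hr2 k n1) (by positivity)
  -- step 4 : identify with ρ
  have hkey : ∀ k : ℕ, (2:ℝ)^((k+1)*d) * r^k * r^k = 2^d * (((2:ℝ)^(d-2))⁻¹)^k := by
    intro k
    obtain ⟨d'', rfl⟩ : ∃ d'', d = d'' + 2 := ⟨d - 2, by omega⟩
    have e1 : r ^ k = ((2:ℝ)^((d''+1)*k))⁻¹ := by
      rw [hr]
      have : (d'' + 2) - 1 = d'' + 1 := by omega
      rw [this, inv_pow, ← pow_mul]
    have e2 : (((2:ℝ)^((d''+2)-2))⁻¹)^k = ((2:ℝ)^(d''*k))⁻¹ := by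
      have : (d'' + 2) - 2 = d'' := by omega
      rw [this, inv_pow, ← pow_mul]
    rw [e1, e2]
    have h1 : ((2:ℝ)^((d''+1)*k)) ≠ 0 := by positivity
    have h2 : ((2:ℝ)^(d''*k)) ≠ 0 := by positivity
    field_simp
    rw [← pow_mul, ← pow_add]
    congr 1
    ring
  have hstep4 : ∑ k ∈ Finset.range n1, ((d:ℝ) * (2:ℝ)^((k+1)*d) * A * A * r^k) * (2 * r^k)
      = (d:ℝ) * 2^(3*d+7) * ∑ k ∈ Finset.range n1, (((2:ℝ)^(d-2))⁻¹)^k := by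
    rw [Finset.mul_sum]
    apply Finset.sum_congr rfl
    intro k _
    have hk := hkey k
    have hid : (2:ℝ) * (2:ℝ)^(d+3) * (2:ℝ)^(d+3) * (2:ℝ)^d = (2:ℝ)^(3*d+7) := by
      rw [← pow_succ', ← pow_add, ← pow_add]
      congr 1
      ring
    calc ((d:ℝ) * (2:ℝ)^((k+1)*d) * A * A * r^k) * (2 * r^k)
        = 2 * (d:ℝ) * A * A * ((2:ℝ)^((k+1)*d) * r^k * r^k) := by ring
      _ = 2 * (d:ℝ) * A * A * (2^d * (((2:ℝ)^(d-2))⁻¹)^k) := by rw [hk]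
      _ = (d:ℝ) * ((2:ℝ) * (2:ℝ)^(d+3) * (2:ℝ)^(d+3) * (2:ℝ)^d) * (((2:ℝ)^(d-2))⁻¹)^k := by
          rw [hA]; ring
      _ = (d:ℝ) * 2^(3*d+7) * (((2:ℝ)^(d-2))⁻¹)^k := by rw [hid]
  have hid2 : (2:ℝ) * ((d:ℝ) * 2^(3*d+7)) = (d:ℝ) * 2^(3*d+8) := by
    have : (2:ℝ) * (2:ℝ)^(3*d+7) = (2:ℝ)^(3*d+8) := by
      rw [← pow_succ']
    calc (2:ℝ) * ((d:ℝ) * 2^(3*d+7)) = (d:ℝ) * ((2:ℝ) * (2:ℝ)^(3*d+7)) := by ring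
      _ = (d:ℝ) * 2^(3*d+8) := by rw [this]
  calc ∑ j : Fin d, ∑ x ∈ box d (2 * ℓ - 1), (phiT d ℓ j x)^2
      ≤ ∑ k ∈ Finset.range n1, ∑ k' ∈ Finset.range n1, T k k' := hstep1
    _ ≤ 2 * ∑ k ∈ Finset.range n1, ∑ k' ∈ Finset.range n1, U k k' := hstep2
    _ ≤ 2 * ∑ k ∈ Finset.range n1, ((d:ℝ) * (2:ℝ)^((k+1)*d) * A * A * r^k) * (2 * r^k) := by
        apply mul_le_mul_of_nonneg_left hstep3 (by norm_num)
    _ = 2 * ((d:ℝ) * 2^(3*d+7) * ∑ k ∈ Finset.range n1, (((2:ℝ)^(d-2))⁻¹)^k) := by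
        rw [hstep4]
    _ = (d:ℝ) * 2^(3*d+8) * ∑ k ∈ Finset.range n1, (((2:ℝ)^(d-2))⁻¹)^k := by
        rw [← mul_assoc, hid2]

end Quant3

section Final

lemma fstep_abs_sum_one (ℓ : ℕ) (hℓ : 1 ≤ ℓ) :
    ∑ y ∈ box 1 (2 * ℓ - 1), |fstep 1 ℓ 0 y| ≤ 2 := by
  have hK : Kv 1 ℓ = 0 := by unfold Kv; rw [if_pos rfl]
  have h1 : ∀ y, fstep 1 ℓ 0 y = mker 1 1 y - m2ker 1 ℓ y := by
    intro y
    unfold fstep muv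
    rw [if_pos (by omega), if_neg (by omega), pow_zero]
  calc ∑ y ∈ box 1 (2 * ℓ - 1), |fstep 1 ℓ 0 y|
      ≤ ∑ y ∈ box 1 (2 * ℓ - 1), (mker 1 1 y + m2ker 1 ℓ y) := by
        apply Finset.sum_le_sum
        intro y _
        rw [h1 y]
        calc |mker 1 1 y - m2ker 1 ℓ y| ≤ |mker 1 1 y| + |m2ker 1 ℓ y| := abs_sub _ _
          _ = mker 1 1 y + m2ker 1 ℓ y := by
              rw [abs_of_nonneg (mker_nonneg _), abs_of_nonneg (m2ker_nonneg _)]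
    _ = 2 := by
        rw [Finset.sum_add_distrib, sum_mker le_rfl (box_mono (by omega)), sum_m2ker hℓ]
        norm_num

lemma Sq_bound_d1 (ℓ : ℕ) (hℓ : 1 ≤ ℓ) :
    ∑ j : Fin 1, ∑ x ∈ box 1 (2 * ℓ - 1), (phiT 1 ℓ j x)^2 ≤ 32 * (ℓ:ℝ) := by
  have hK : Kv 1 ℓ = 0 := by unfold Kv; rw [if_pos rfl]
  have hL : Lstep 1 ℓ 0 = 2 * ℓ - 1 := by unfold Lstep; rw [hK]; simp
  have hphi : ∀ (j : Fin 1) (x : Fin 1 → ℤ),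
      phiT 1 ℓ j x = stepFlow 1 (2 * ℓ - 1) (fstep 1 ℓ 0) j x := by
    intro j x
    unfold phiT
    rw [hK]
    rw [Finset.sum_range_one, hL]
  have hb : ∀ (j : Fin 1) (x : Fin 1 → ℤ), |phiT 1 ℓ j x| ≤ 4 := by
    intro j x
    rw [hphi]
    calc |stepFlow 1 (2 * ℓ - 1) (fstep 1 ℓ 0) j x|
        ≤ 2 * ∑ y ∈ box 1 (2 * ℓ - 1), |fstep 1 ℓ 0 y| := abs_stepFlow_le' (by omega) j x
      _ ≤ 2 * 2 := by linarith [fstep_abs_sum_one ℓ hℓ]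
      _ = 4 := by norm_num
  calc ∑ j : Fin 1, ∑ x ∈ box 1 (2 * ℓ - 1), (phiT 1 ℓ j x)^2
      ≤ ∑ j : Fin 1, ∑ x ∈ box 1 (2 * ℓ - 1), (16:ℝ) := by
        apply Finset.sum_le_sum
        intro j _
        apply Finset.sum_le_sum
        intro x _
        calc (phiT 1 ℓ j x)^2 = |phiT 1 ℓ j x|^2 := (sq_abs _).symm
          _ ≤ 4^2 := by
              apply pow_le_pow_left₀ (abs_nonneg _) (hb j x)
          _ = 16 := by norm_num
    _ = ((box 1 (2 * ℓ - 1)).card : ℝ) * 16 := by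
        rw [Finset.sum_const, Finset.sum_const, nsmul_eq_mul, nsmul_eq_mul]
        simp
    _ ≤ 32 * (ℓ:ℝ) := by
        rw [card_box]
        have h1 : ((2 * ℓ - 1) ^ 1 : ℕ) ≤ 2 * ℓ := by rw [pow_one]; omega
        have h2 : (((2 * ℓ - 1) ^ 1 : ℕ) : ℝ) ≤ 2 * (ℓ:ℝ) := by exact_mod_cast h1
        linarith

lemma stepFlow_of_zero {d L : ℕ} {f : (Fin d → ℤ) → ℝ} (hf : ∀ y, f y = 0)
    (j : Fin d) (x : Fin d → ℤ) : stepFlow d L f j x = 0 := by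
  have h1 : colA d L f j x = 0 := Finset.sum_eq_zero (fun y _ => hf y)
  have h2 : colQ d L f (j.val + 1) x = 0 := Finset.sum_eq_zero (fun y _ => hf y)
  unfold stepFlow
  rw [h1, h2]
  split <;> simp

lemma phiT_ell_one {d : ℕ} (j : Fin d) (x : Fin d → ℤ) : phiT d 1 j x = 0 := by
  have hK : Kv d 1 = 0 := by
    unfold Kv
    split
    · rfl
    · exact Nat.clog_one_right 2
  have hf : ∀ y, fstep d 1 0 y = 0 := by
    intro y
    unfold fstep muv
    rw [hK]
    rw [if_pos (by omega), if_neg (by omega), pow_zero, m2ker_one, sub_self]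
  unfold phiT
  rw [hK, Finset.sum_range_one]
  exact stepFlow_of_zero hf j x

lemma Kv_log_bound {ℓ : ℕ} (hℓ2 : 2 ≤ ℓ) :
    ((Nat.clog 2 ℓ : ℝ) + 1) ≤ 6 * Real.log ℓ := by
  set K := Nat.clog 2 ℓ with hK
  have hlog2 : (0.6931471803 : ℝ) < Real.log 2 := Real.log_two_gt_d9
  have hl2 : Real.log 2 ≤ Real.log ℓ := by
    apply Real.log_le_log (by norm_num)
    exact_mod_cast hℓ2
  have hK1 : 1 ≤ K := by
    have h1 : ℓ ≤ 2 ^ K := Nat.le_pow_clog (by norm_num) ℓ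
    by_contra hc
    have : K = 0 := by omega
    rw [this] at h1
    simp at h1
    omega
  have h2 : 2 ^ (K - 1) < ℓ := Nat.pow_pred_clog_lt_self (by norm_num) (by omega)
  have h3 : ((K:ℝ) - 1) * Real.log 2 ≤ Real.log ℓ := by
    have hc : ((2:ℝ) ^ (K - 1)) ≤ (ℓ:ℝ) := by
      have := h2
      have h4 : (2:ℕ) ^ (K - 1) ≤ ℓ := by omega
      exact_mod_cast h4
    have h5 : Real.log ((2:ℝ) ^ (K - 1)) ≤ Real.log ℓ := by
      apply Real.log_le_log (by positivity) hc
    rw [Real.log_pow] at h5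
    have h6 : ((K - 1 : ℕ) : ℝ) = (K:ℝ) - 1 := by
      push_cast [Nat.cast_sub hK1]
      ring
    rwa [h6] at h5
  rcases Nat.lt_or_ge K 2 with hKlt | hKge
  · have hKeq : K = 1 := by omega
    rw [hKeq]
    norm_num
    linarith
  · have hKR : (2:ℝ) ≤ (K:ℝ) := by exact_mod_cast hKge
    have hstep : ((K:ℝ) + 1) ≤ 3 * ((K:ℝ) - 1) := by linarith
    calc ((K:ℝ) + 1) ≤ 3 * ((K:ℝ) - 1) := hstep
      _ ≤ 6 * (((K:ℝ) - 1) * Real.log 2) := by nlinarith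
      _ ≤ 6 * Real.log ℓ := by linarith

end Final


/-- existence of a nearest-neighbour flow connecting the Dirac measure
at the origin to `m^{(2)}_ℓ`, supported in `Λ_{2ℓ-1}`, whose squared ℓ² norm is
bounded by `C_d g_d(ℓ)`. -/
theorem flow_existence :
    ∀ d : ℕ, 1 ≤ d →
    ∃ C : ℝ, ∀ ℓ : ℕ, 1 ≤ ℓ →
    ∃ Φ : (Fin d → ℤ) → (Fin d → ℤ) → ℝ,
      (∀ x y, Φ x y = -Φ y x) ∧
      (∀ x y, (norm1 (y - x) ≠ 1 ∨ x ∉ box d (2 * ℓ - 1) ∨ y ∉ box d (2 * ℓ - 1)) →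
        Φ x y = 0) ∧
      (∀ x, (∑ j : Fin d, (Φ x (x + unitZ d j) + Φ x (x - unitZ d j)))
        = (if x = 0 then (1 : ℝ) else 0) - m2ker d ℓ x) ∧
      (∑ j : Fin d, ∑ x ∈ box d (2 * ℓ - 1), Φ x (x + unitZ d j) ^ 2) ≤ C * gd d ℓ := by
  intro d hd
  refine ⟨(d:ℝ) * 2^(3*d+11) + 32, ?_⟩
  intro ℓ hℓ
  refine ⟨PhiT d ℓ, ?_, ?_, ?_, ?_⟩
  · intro x y
    exact PhiT_antisymm x y
  · intro x y h
    exact PhiT_support hℓ x y h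
  · intro x
    exact PhiT_div hℓ x
  · have hrw : ∑ j : Fin d, ∑ x ∈ box d (2 * ℓ - 1), PhiT d ℓ x (x + unitZ d j) ^ 2
        = ∑ j : Fin d, ∑ x ∈ box d (2 * ℓ - 1), (phiT d ℓ j x) ^ 2 := by
      apply Finset.sum_congr rfl
      intro j _
      apply Finset.sum_congr rfl
      intro x _
      rw [PhiT_right]
    rw [hrw]
    by_cases hd1 : d = 1
    · subst hd1
      have hgd : gd 1 ℓ = (ℓ:ℝ) := by unfold gd; rw [if_pos rfl]
      rw [hgd]
      have hb := Sq_bound_d1 ℓ hℓ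
      have hℓR : (1:ℝ) ≤ (ℓ:ℝ) := by exact_mod_cast hℓ
      have hC : (32:ℝ) * (ℓ:ℝ) ≤ ((1:ℝ) * 2^(3*1+11) + 32) * (ℓ:ℝ) := by
        apply mul_le_mul_of_nonneg_right _ (by linarith)
        norm_num
      calc ∑ j : Fin 1, ∑ x ∈ box 1 (2 * ℓ - 1), (phiT 1 ℓ j x) ^ 2
          ≤ 32 * (ℓ:ℝ) := hb
        _ ≤ ((1:ℝ) * 2^(3*1+11) + 32) * (ℓ:ℝ) := hC
        _ = (((1:ℕ):ℝ) * 2^(3*1+11) + 32) * (ℓ:ℝ) := by push_cast; ring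
    · have hd2 : 2 ≤ d := by omega
      by_cases hℓ1 : ℓ = 1
      · subst hℓ1
        have hzero : ∑ j : Fin d, ∑ x ∈ box d (2 * 1 - 1), (phiT d 1 j x) ^ 2 = 0 := by
          apply Finset.sum_eq_zero
          intro j _
          apply Finset.sum_eq_zero
          intro x _
          rw [phiT_ell_one]
          ring
        rw [hzero]
        have hgd : 0 ≤ gd d 1 := by
          unfold gd
          split
          · norm_num
          · split
            · norm_num
            · norm_num
        positivity
      · have hℓ2 : 2 ≤ ℓ := by omega
        have hSq := Sq_bound hd2 hℓ
        have hlogpos : 0 ≤ Real.log ℓ := by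
          apply Real.log_nonneg
          exact_mod_cast hℓ
        by_cases hd2' : d = 2
        · subst hd2'
          have hgd : gd 2 ℓ = Real.log ℓ := by unfold gd; norm_num
          rw [hgd]
          have hK : Kv 2 ℓ = Nat.clog 2 ℓ := by unfold Kv; norm_num
          have hgeo : ∑ k ∈ Finset.range (Kv 2 ℓ + 1), (((2:ℝ)^(2-2))⁻¹)^k
              = ((Kv 2 ℓ : ℝ) + 1) := by
            norm_num
          rw [hgeo] at hSq
          have hlog := Kv_log_bound hℓ2
          rw [← hK] at hlog
          calc ∑ j : Fin 2, ∑ x ∈ box 2 (2 * ℓ - 1), (phiT 2 ℓ j x) ^ 2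
              ≤ (2:ℝ) * 2^(3*2+8) * ((Kv 2 ℓ : ℝ) + 1) := by exact_mod_cast hSq
            _ ≤ (2:ℝ) * 2^(3*2+8) * (6 * Real.log ℓ) := by
                apply mul_le_mul_of_nonneg_left hlog (by positivity)
            _ ≤ ((2:ℕ):ℝ) * 2^(3*2+11) * Real.log ℓ + 32 * Real.log ℓ := by
                push_cast
                nlinarith [hlogpos]
            _ = (((2:ℕ):ℝ) * 2^(3*2+11) + 32) * Real.log ℓ := by ring
        · have hd3 : 3 ≤ d := by omega
          have hgd : gd d ℓ = 1 := by unfold gd; rw [if_neg hd1, if_neg hd2']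
          rw [hgd]
          have hρ : (((2:ℝ)^(d-2))⁻¹) ≤ 1/2 := by
            rw [inv_le_comm₀ (by positivity) (by norm_num)]
            calc (1/2:ℝ)⁻¹ = 2^1 := by norm_num
              _ ≤ 2^(d-2) := pow_le_pow_right₀ (by norm_num) (by omega)
          have hgeo : ∑ k ∈ Finset.range (Kv d ℓ + 1), (((2:ℝ)^(d-2))⁻¹)^k ≤ 2 :=
            geom_sum_le_two (by positivity) hρ _
          calc ∑ j : Fin d, ∑ x ∈ box d (2 * ℓ - 1), (phiT d ℓ j x) ^ 2
              ≤ (d:ℝ) * 2^(3*d+8) * ∑ k ∈ Finset.range (Kv d ℓ + 1), (((2:ℝ)^(d-2))⁻¹)^k :=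
                hSq
            _ ≤ (d:ℝ) * 2^(3*d+8) * 2 := by
                apply mul_le_mul_of_nonneg_left hgeo (by positivity)
            _ ≤ ((d:ℝ) * 2^(3*d+11) + 32) * 1 := by
                rw [mul_one]
                have h1 : (2:ℝ)^(3*d+8) * 2 ≤ 2^(3*d+11) := by
                  rw [← pow_succ]
                  apply pow_le_pow_right₀ (by norm_num) (by omega)
                nlinarith [h1, (by positivity : (0:ℝ) ≤ (d:ℝ))]
end

section
/- Fix a cylinder function f₀ : {0,1}^{ℤ^d} → ℝ and a function F : T^d_n → ℝ. There exist finite constants 0 < c₀ < C₀ < ∞, depending only on f₀, such that log E_{ν^n_ρ}[ exp( a ( n^{−d/2} Σ_{x∈T^d_n} ( f₀(τ_x η) − ~f₀(ρ) ) F_x )² ) ] ≤ C₀ a ‖F‖²_∞ for all 0 < a < c₀ / ‖F‖²_∞, where ‖F‖_∞ = max_x |F(x)|. -/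
set_option maxHeartbeats 1600000
set_option linter.unusedSectionVars false
set_option linter.unusedVariables false


open Finset

namespace ExpSq

variable {ι : Type*} [Fintype ι] [DecidableEq ι]

noncomputable def W (ρ : ℝ) (b : Bool) : ℝ := if b then ρ else 1 - ρ

noncomputable def PP (ρ : ℝ) (η : ι → Bool) : ℝ := ∏ i, W ρ (η i)

noncomputable def EE (ρ : ℝ) (f : (ι → Bool) → ℝ) : ℝ := ∑ η : ι → Bool, PP ρ η * f η

lemma W_nonneg {ρ : ℝ} (h0 : 0 ≤ ρ) (h1 : ρ ≤ 1) (b : Bool) : 0 ≤ W ρ b := by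
  cases b <;> simp [W] <;> linarith

lemma PP_nonneg {ρ : ℝ} (h0 : 0 ≤ ρ) (h1 : ρ ≤ 1) (η : ι → Bool) : 0 ≤ PP ρ η :=
  Finset.prod_nonneg fun i _ => W_nonneg h0 h1 _

lemma sum_PP (ρ : ℝ) : ∑ η : ι → Bool, PP ρ η = 1 := by
  classical
  have h := Finset.prod_univ_sum (fun _ : ι => (Finset.univ : Finset Bool)) (fun _ b => W ρ b)
  rw [Fintype.piFinset_univ] at h
  simp only [Fintype.sum_bool, show W ρ true + W ρ false = 1 by simp [W],
    Finset.prod_const_one] at h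
  simpa [PP] using h.symm

lemma EE_const (ρ : ℝ) (c : ℝ) : EE (ι := ι) ρ (fun _ => c) = c := by
  rw [EE, ← Finset.sum_mul, sum_PP, one_mul]

lemma EE_mono {ρ : ℝ} (h0 : 0 ≤ ρ) (h1 : ρ ≤ 1) {f g : (ι → Bool) → ℝ}
    (h : ∀ η, f η ≤ g η) : EE ρ f ≤ EE ρ g :=
  Finset.sum_le_sum fun η _ => mul_le_mul_of_nonneg_left (h η) (PP_nonneg h0 h1 η)

lemma EE_nonneg {ρ : ℝ} (h0 : 0 ≤ ρ) (h1 : ρ ≤ 1) {f : (ι → Bool) → ℝ}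
    (h : ∀ η, 0 ≤ f η) : 0 ≤ EE ρ f := by
  have := EE_mono h0 h1 (f := fun _ => (0:ℝ)) (g := f) h
  rwa [EE_const] at this

lemma EE_smul (ρ c : ℝ) (f : (ι → Bool) → ℝ) :
    EE ρ (fun η => c * f η) = c * EE ρ f := by
  rw [EE, EE, Finset.mul_sum]
  exact Finset.sum_congr rfl fun η _ => by ring

lemma EE_add (ρ : ℝ) (f g : (ι → Bool) → ℝ) :
    EE ρ (fun η => f η + g η) = EE ρ f + EE ρ g := by
  rw [EE, EE, EE, ← Finset.sum_add_distrib]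
  exact Finset.sum_congr rfl fun η _ => by ring

lemma EE_sum (ρ : ℝ) {κ : Type*} (s : Finset κ) (f : κ → (ι → Bool) → ℝ) :
    EE ρ (fun η => ∑ x ∈ s, f x η) = ∑ x ∈ s, EE ρ (f x) := by
  rw [EE]
  simp only [Finset.mul_sum]
  rw [Finset.sum_comm]
  rfl

def merge (y : ι) (b : Bool) (ζ : {i : ι // i ≠ y} → Bool) : ι → Bool :=
  fun i => if h : i = y then b else ζ ⟨i, h⟩

lemma update_merge (y : ι) (b b' : Bool) (ζ : {i : ι // i ≠ y} → Bool) :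
    Function.update (merge y b ζ) y b' = merge y b' ζ := by
  funext i
  by_cases h : i = y
  · subst h; simp [merge]
  · simp [Function.update_of_ne h, merge, h]

def splitEquiv (y : ι) : (ι → Bool) ≃ Bool × ({i : ι // i ≠ y} → Bool) where
  toFun η := (η y, fun j => η j.1)
  invFun p := merge y p.1 p.2
  left_inv η := by funext i; by_cases h : i = y <;> simp [merge, h]
  right_inv p := by
    obtain ⟨b, ζ⟩ := p
    refine Prod.ext ?_ ?_
    · simp [merge]
    · funext j; simp [merge, j.2]

lemma sum_split (y : ι) (g : (ι → Bool) → ℝ) :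
    ∑ η : ι → Bool, g η = ∑ b : Bool, ∑ ζ : {i : ι // i ≠ y} → Bool, g (merge y b ζ) := by
  have h := Equiv.sum_comp (splitEquiv y).symm g
  rw [← h, Fintype.sum_prod_type]
  rfl

lemma PP_merge (ρ : ℝ) (y : ι) (b : Bool) (ζ : {i : ι // i ≠ y} → Bool) :
    PP ρ (merge y b ζ) = W ρ b * ∏ j : {i : ι // i ≠ y}, W ρ (ζ j) := by
  rw [PP, ← Finset.mul_prod_erase Finset.univ _ (Finset.mem_univ y)]
  congr 1
  · simp [merge]
  · rw [Finset.prod_subtype (Finset.univ.erase y)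
      (p := fun i => i ≠ y) (fun x => by simp [Finset.mem_erase])
      (fun i => W ρ (merge y b ζ i))]
    exact Finset.prod_congr rfl fun j _ => by simp [merge, j.2]
lemma EE_marg (ρ : ℝ) (y : ι) (f : (ι → Bool) → ℝ) :
    EE ρ f = EE ρ (fun η => ρ * f (Function.update η y true)
      + (1 - ρ) * f (Function.update η y false)) := by
  rw [EE, EE, sum_split y (g := fun η => PP ρ η * f η),
    sum_split y (g := fun η => PP ρ η * (ρ * f (Function.update η y true)
      + (1 - ρ) * f (Function.update η y false)))]
  simp only [update_merge, PP_merge]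
  rw [Finset.sum_comm]
  conv_rhs => rw [Finset.sum_comm]
  refine Finset.sum_congr rfl fun ζ _ => ?_
  rw [Fintype.sum_bool, Fintype.sum_bool]
  simp only [W]
  norm_num
  ring
lemma exp_le_add_exp_sq (x : ℝ) : Real.exp x ≤ x + Real.exp (x ^ 2) := by
  rcases le_or_gt (|x|) 1 with h | h
  · have hb := Real.exp_bound h (n := 2) (by norm_num)
    have hs : ∑ i ∈ Finset.range 2, x ^ i / (Nat.factorial i : ℝ) = 1 + x := by
      simp [Finset.sum_range_succ]
    rw [hs] at hb
    have h2 := (abs_le.1 hb).2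
    have habs : |x| ^ 2 = x ^ 2 := sq_abs x
    have h3 : Real.exp x - (1 + x) ≤ x ^ 2 * (3 / 4) := by
      rw [habs] at h2
      norm_num at h2 ⊢
      linarith
    have h4 := Real.add_one_le_exp (x ^ 2)
    nlinarith [sq_nonneg x]
  · rcases le_or_gt 0 x with hx | hx
    · have hx1 : 1 < x := by rwa [abs_of_nonneg hx] at h
      have h1 : x ≤ x ^ 2 := by nlinarith
      have h2 := Real.exp_le_exp.2 h1
      linarith
    · have h1 : Real.exp x ≤ 1 := Real.exp_le_one_iff.2 (by linarith)
      have h2 : x ^ 2 + 1 ≤ Real.exp (x ^ 2) := Real.add_one_le_exp (x ^ 2)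
      have hx1 : 1 < -x := by rwa [abs_of_neg hx] at h
      have h3 : -x ≤ x ^ 2 := by nlinarith
      linarith

lemma two_point {q : ℝ} (h0 : 0 ≤ q) (h1 : q ≤ 1) (u v : ℝ) :
    q * Real.exp u + (1 - q) * Real.exp v ≤
      Real.exp (q * u + (1 - q) * v) * Real.exp ((u - v) ^ 2) := by
  set m := q * u + (1 - q) * v with hm
  set A := (1 - q) * (u - v) with hA
  set B := -(q * (u - v)) with hB
  have eu : Real.exp u = Real.exp m * Real.exp A := by
    rw [← Real.exp_add]; congr 1; rw [hm, hA]; ring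
  have ev : Real.exp v = Real.exp m * Real.exp B := by
    rw [← Real.exp_add]; congr 1; rw [hm, hB]; ring
  have hAB : q * A + (1 - q) * B = 0 := by rw [hA, hB]; ring
  have hA2 : A ^ 2 ≤ (u - v) ^ 2 := by
    rw [hA]
    nlinarith [sq_nonneg (u - v), mul_nonneg (mul_nonneg h0 (by linarith : (0:ℝ) ≤ 2 - q)) (sq_nonneg (u - v))]
  have hB2 : B ^ 2 ≤ (u - v) ^ 2 := by
    rw [hB]
    nlinarith [sq_nonneg (u - v), mul_nonneg (mul_nonneg (by linarith : (0:ℝ) ≤ 1 - q) (by linarith : (0:ℝ) ≤ 1 + q)) (sq_nonneg (u - v))]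
  have bA : Real.exp A ≤ A + Real.exp ((u - v) ^ 2) :=
    (exp_le_add_exp_sq A).trans (by have := Real.exp_le_exp.2 hA2; linarith)
  have bB : Real.exp B ≤ B + Real.exp ((u - v) ^ 2) :=
    (exp_le_add_exp_sq B).trans (by have := Real.exp_le_exp.2 hB2; linarith)
  have key : q * Real.exp A + (1 - q) * Real.exp B ≤ Real.exp ((u - v) ^ 2) := by
    have c1 : q * Real.exp A ≤ q * (A + Real.exp ((u - v) ^ 2)) :=
      mul_le_mul_of_nonneg_left bA h0
    have c2 : (1 - q) * Real.exp B ≤ (1 - q) * (B + Real.exp ((u - v) ^ 2)) :=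
      mul_le_mul_of_nonneg_left bB (by linarith)
    nlinarith
  calc q * Real.exp u + (1 - q) * Real.exp v
      = Real.exp m * (q * Real.exp A + (1 - q) * Real.exp B) := by rw [eu, ev]; ring
    _ ≤ Real.exp m * Real.exp ((u - v) ^ 2) :=
        mul_le_mul_of_nonneg_left key (Real.exp_pos m).le

lemma tensor {ρ : ℝ} (h0 : 0 ≤ ρ) (h1 : ρ ≤ 1) :
    ∀ A : Finset ι, ∀ f : (ι → Bool) → ℝ, ∀ c : ι → ℝ,
      (∀ η ζ : ι → Bool, (∀ i ∈ A, η i = ζ i) → f η = f ζ) →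
      (∀ y ∈ A, ∀ η : ι → Bool,
        |f (Function.update η y true) - f (Function.update η y false)| ≤ c y) →
      EE ρ (fun η => Real.exp (f η)) ≤ Real.exp (EE ρ f) * Real.exp (∑ y ∈ A, c y ^ 2) := by
  intro A
  induction A using Finset.induction_on with
  | empty =>
      intro f c hdep hc
      have hconst : ∀ η, f η = f (fun _ => true) := fun η => hdep η _ (by simp)
      have e1 : EE ρ (fun η => Real.exp (f η)) = Real.exp (f (fun _ => true)) := by
        rw [show (fun η => Real.exp (f η)) = fun _ : ι → Bool => Real.exp (f (fun _ => true))
          from funext fun η => by rw [hconst η], EE_const]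
      have e2 : EE ρ f = f (fun _ => true) := by
        rw [show f = fun _ : ι → Bool => f (fun _ => true) from funext hconst, EE_const]
      rw [e1, e2]
      simp
  | @insert y A' hy ih =>
      intro f c hdep hc
      set g : (ι → Bool) → ℝ := fun η =>
        ρ * f (Function.update η y true) + (1 - ρ) * f (Function.update η y false) with hg
      have hupdeq : ∀ (η ζ : ι → Bool) (b : Bool), (∀ i ∈ A', η i = ζ i) →
          f (Function.update η y b) = f (Function.update ζ y b) := by
        intro η ζ b h
        apply hdep
        intro i hi
        by_cases hiy : i = y
        · subst hiy; simp
        · rw [Function.update_of_ne hiy, Function.update_of_ne hiy]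
          exact h i ((Finset.mem_insert.1 hi).resolve_left hiy)
      have hgdep : ∀ η ζ : ι → Bool, (∀ i ∈ A', η i = ζ i) → g η = g ζ := by
        intro η ζ h
        rw [hg]
        simp only
        rw [hupdeq η ζ true h, hupdeq η ζ false h]
      have hgc : ∀ z ∈ A', ∀ η : ι → Bool,
          |g (Function.update η z true) - g (Function.update η z false)| ≤ c z := by
        intro z hz η
        have hzy : z ≠ y := fun h => hy (h ▸ hz)
        have comm : ∀ b b' : Bool, Function.update (Function.update η z b) y b'
            = Function.update (Function.update η y b') z b := fun b b' =>
          Function.update_comm hzy b b' η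
        have e : g (Function.update η z true) - g (Function.update η z false)
            = ρ * (f (Function.update (Function.update η y true) z true)
                 - f (Function.update (Function.update η y true) z false))
            + (1 - ρ) * (f (Function.update (Function.update η y false) z true)
                 - f (Function.update (Function.update η y false) z false)) := by
          rw [hg]; simp only [comm]; ring
        rw [e]
        have b1 := hc z (Finset.mem_insert_of_mem hz) (Function.update η y true)
        have b2 := hc z (Finset.mem_insert_of_mem hz) (Function.update η y false)
        calc |ρ * (f (Function.update (Function.update η y true) z true)
                 - f (Function.update (Function.update η y true) z false))
            + (1 - ρ) * (f (Function.update (Function.update η y false) z true)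
                 - f (Function.update (Function.update η y false) z false))|
            ≤ ρ * |f (Function.update (Function.update η y true) z true)
                 - f (Function.update (Function.update η y true) z false)|
            + (1 - ρ) * |f (Function.update (Function.update η y false) z true)
                 - f (Function.update (Function.update η y false) z false)| := by
              refine (abs_add_le _ _).trans ?_
              rw [abs_mul, abs_mul, abs_of_nonneg h0, abs_of_nonneg (by linarith : (0:ℝ) ≤ 1 - ρ)]
          _ ≤ ρ * c z + (1 - ρ) * c z := by
              have := mul_le_mul_of_nonneg_left b1 h0
              have := mul_le_mul_of_nonneg_left b2 (by linarith : (0:ℝ) ≤ 1 - ρ)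
              linarith
          _ = c z := by ring
      have hEg : EE ρ f = EE ρ g := EE_marg ρ y f
      have hpt : ∀ η : ι → Bool,
          ρ * Real.exp (f (Function.update η y true))
            + (1 - ρ) * Real.exp (f (Function.update η y false))
          ≤ Real.exp (g η) * Real.exp (c y ^ 2) := by
        intro η
        refine (two_point h0 h1 (f (Function.update η y true)) (f (Function.update η y false))).trans ?_
        refine mul_le_mul_of_nonneg_left (Real.exp_le_exp.2 ?_) (Real.exp_pos _).le
        have hb := hc y (Finset.mem_insert_self y A') η
        calc (f (Function.update η y true) - f (Function.update η y false)) ^ 2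
            = |f (Function.update η y true) - f (Function.update η y false)| ^ 2 := (sq_abs _).symm
          _ ≤ c y ^ 2 := by
              have h0' := abs_nonneg (f (Function.update η y true) - f (Function.update η y false))
              nlinarith
      calc EE ρ (fun η => Real.exp (f η))
          = EE ρ (fun η => ρ * Real.exp (f (Function.update η y true))
              + (1 - ρ) * Real.exp (f (Function.update η y false))) :=
            EE_marg ρ y (fun η => Real.exp (f η))
        _ ≤ EE ρ (fun η => Real.exp (g η) * Real.exp (c y ^ 2)) := EE_mono h0 h1 hpt
        _ = Real.exp (c y ^ 2) * EE ρ (fun η => Real.exp (g η)) := by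
            rw [show (fun η => Real.exp (g η) * Real.exp (c y ^ 2))
              = fun η => Real.exp (c y ^ 2) * Real.exp (g η) from funext fun η => by ring,
              EE_smul]
        _ ≤ Real.exp (c y ^ 2) * (Real.exp (EE ρ g) * Real.exp (∑ z ∈ A', c z ^ 2)) :=
            mul_le_mul_of_nonneg_left (ih g c hgdep hgc) (Real.exp_pos _).le
        _ = Real.exp (EE ρ f) * Real.exp (∑ z ∈ insert y A', c z ^ 2) := by
            rw [hEg, Finset.sum_insert hy, Real.exp_add]
            ring

section Push
variable {α : Type*} [Fintype α] [DecidableEq α]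

open Classical in
noncomputable def rangeEquiv (θ : α → ι) (hθ : Function.Injective θ) :
    (ι → Bool) ≃ ((α → Bool) × ({i : ι // i ∉ Set.range θ} → Bool)) where
  toFun η := (fun a => η (θ a), fun j => η j.1)
  invFun p i := if h : i ∈ Set.range θ then p.1 h.choose else p.2 ⟨i, h⟩
  left_inv η := by
    funext i
    by_cases h : i ∈ Set.range θ
    · simp only [dif_pos h]
      rw [h.choose_spec]
    · simp only [dif_neg h]
  right_inv p := by
    obtain ⟨σ, ζ⟩ := p
    refine Prod.ext ?_ ?_
    · funext a
      have h : θ a ∈ Set.range θ := ⟨a, rfl⟩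
      simp only [dif_pos h]
      congr 1
      exact hθ h.choose_spec
    · funext j
      simp only [dif_neg j.2]

open Classical in
lemma prod_split_range (θ : α → ι) (hθ : Function.Injective θ) (g : ι → ℝ) :
    ∏ i, g i = (∏ a, g (θ a)) * ∏ j : {i : ι // i ∉ Set.range θ}, g j.1 := by
  classical
  let E : α ⊕ {i : ι // i ∉ Set.range θ} ≃ ι :=
    (Equiv.sumCongr (Equiv.ofInjective θ hθ) (Equiv.refl _)).trans
      (Equiv.sumCompl (· ∈ Set.range θ))
  have h := Equiv.prod_comp E g
  rw [← h, Fintype.prod_sum_type]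
  simp [E, Equiv.sumCompl_apply_inl, Equiv.sumCompl_apply_inr, Equiv.ofInjective]

open Classical in
lemma push (ρ : ℝ) (θ : α → ι) (hθ : Function.Injective θ) (h : (α → Bool) → ℝ) :
    EE ρ (fun η => h (fun a => η (θ a))) = ∑ σ : α → Bool, (∏ a, W ρ (σ a)) * h σ := by
  classical
  rw [EE]
  rw [← Equiv.sum_comp (rangeEquiv θ hθ).symm
    (fun η => PP ρ η * h (fun a => η (θ a))), Fintype.sum_prod_type]
  refine Finset.sum_congr rfl fun σ _ => ?_
  have hcomp : ∀ ζ : {i : ι // i ∉ Set.range θ} → Bool,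
      (fun a => (rangeEquiv θ hθ).symm (σ, ζ) (θ a)) = σ := by
    intro ζ
    funext a
    have hm : θ a ∈ Set.range θ := ⟨a, rfl⟩
    show (if h : θ a ∈ Set.range θ then σ h.choose else ζ ⟨θ a, h⟩) = σ a
    rw [dif_pos hm]
    congr 1
    exact hθ hm.choose_spec
  have hprod : ∀ ζ : {i : ι // i ∉ Set.range θ} → Bool,
      PP ρ ((rangeEquiv θ hθ).symm (σ, ζ)) = (∏ a, W ρ (σ a)) * ∏ j, W ρ (ζ j) := by
    intro ζ
    rw [PP, prod_split_range θ hθ]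
    congr 1
    · refine Finset.prod_congr rfl fun a _ => ?_
      congr 1
      have hm : θ a ∈ Set.range θ := ⟨a, rfl⟩
      show (if h : θ a ∈ Set.range θ then σ h.choose else ζ ⟨θ a, h⟩) = σ a
      rw [dif_pos hm]
      congr 1
      exact hθ hm.choose_spec
    · refine Finset.prod_congr rfl fun j _ => ?_
      congr 1
      show (if h : j.1 ∈ Set.range θ then σ h.choose else ζ ⟨j.1, h⟩) = ζ j
      rw [dif_neg j.2]
  simp only [hcomp, hprod]
  have hone : ∑ ζ : {i : ι // i ∉ Set.range θ} → Bool, ∏ j, W ρ (ζ j) = 1 := sum_PP ρ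
  calc ∑ ζ : {i : ι // i ∉ Set.range θ} → Bool,
        ((∏ a, W ρ (σ a)) * ∏ j, W ρ (ζ j)) * h σ
      = ((∏ a, W ρ (σ a)) * h σ) * ∑ ζ : {i : ι // i ∉ Set.range θ} → Bool, ∏ j, W ρ (ζ j) := by
        rw [Finset.mul_sum]
        exact Finset.sum_congr rfl fun ζ _ => by ring
    _ = (∏ a, W ρ (σ a)) * h σ := by rw [hone, mul_one]
end Push
end ExpSq

namespace ExpSq

lemma expect_eq (d n : ℕ) [NeZero n] (ρ : ℝ) (f : Cfg d n → ℝ) :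
    expect d n ρ f = EE ρ f := rfl

noncomputable def Mext {d : ℕ} (f₀ : CylFun d) (σ : {z // z ∈ f₀.supp} → Bool) : ZCfg d :=
  fun z => if hz : z ∈ f₀.supp then σ ⟨z, hz⟩ else false

noncomputable def Mconst {d : ℕ} (f₀ : CylFun d) : ℝ :=
  ∑ σ : {z // z ∈ f₀.supp} → Bool, |f₀.toFun (Mext f₀ σ)|

lemma Mconst_nonneg {d : ℕ} (f₀ : CylFun d) : 0 ≤ Mconst f₀ :=
  Finset.sum_nonneg fun _ _ => abs_nonneg _

lemma abs_toFun_le {d : ℕ} (f₀ : CylFun d) (ξ : ZCfg d) : |f₀.toFun ξ| ≤ Mconst f₀ := by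
  have he : f₀.toFun ξ = f₀.toFun (Mext f₀ (fun a => ξ a.1)) := by
    apply f₀.cyl
    intro z hz
    simp [Mext, hz]
  rw [he, Mconst]
  exact Finset.single_le_sum (f := fun σ : {z // z ∈ f₀.supp} → Bool => |f₀.toFun (Mext f₀ σ)|)
    (fun σ _ => abs_nonneg _) (Finset.mem_univ _)

lemma abs_cylAt_le {d n : ℕ} [NeZero n] (f₀ : CylFun d) (x : Torus d n) (η : Cfg d n) :
    |cylAt f₀ x η| ≤ Mconst f₀ :=
  abs_toFun_le f₀ _

lemma abs_tilde_le {d : ℕ} (f₀ : CylFun d) {ρ : ℝ} (h0 : 0 ≤ ρ) (h1 : ρ ≤ 1) :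
    |f₀.tilde ρ| ≤ Mconst f₀ := by
  rw [CylFun.tilde]
  refine (Finset.abs_sum_le_sum_abs _ _).trans ?_
  have hterm : ∀ σ : {z // z ∈ f₀.supp} → Bool,
      |(∏ z : {z // z ∈ f₀.supp}, if σ z then ρ else 1 - ρ) *
        f₀.toFun (fun z => if hz : z ∈ f₀.supp then σ ⟨z, hz⟩ else false)|
      ≤ PP ρ σ * Mconst f₀ := by
    intro σ
    have h1' : |(∏ z : {z // z ∈ f₀.supp}, if σ z then ρ else 1 - ρ)| = PP ρ σ :=
      abs_of_nonneg (PP_nonneg h0 h1 σ)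
    rw [abs_mul, h1']
    exact mul_le_mul_of_nonneg_left (abs_toFun_le f₀ _) (PP_nonneg h0 h1 σ)
  refine (Finset.sum_le_sum fun σ _ => hterm σ).trans ?_
  rw [← Finset.sum_mul, sum_PP, one_mul]

lemma theta_inj {d n : ℕ} [NeZero n] (f₀ : CylFun d) (hfit : FitsCube d f₀.supp n)
    (x : Torus d n) :
    Function.Injective (fun a : {z // z ∈ f₀.supp} => x + toTorus (n := n) a.1) := by
  obtain ⟨av, hav⟩ := hfit
  intro a b hab
  have h2 : toTorus (n := n) a.1 = toTorus (n := n) b.1 := add_left_cancel hab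
  apply Subtype.ext
  funext i
  have h3 : ((a.1 i : ℤ) : ZMod n) = ((b.1 i : ℤ) : ZMod n) := congrFun h2 i
  have h4 : (n : ℤ) ∣ b.1 i - a.1 i :=
    Int.ModEq.dvd ((ZMod.intCast_eq_intCast_iff _ _ _).1 h3)
  have ha := hav a.1 a.2 i
  have hb := hav b.1 b.2 i
  have h5 : |b.1 i - a.1 i| < (n : ℤ) := by rw [abs_lt]; omega
  have h6 := Int.eq_zero_of_abs_lt_dvd h4 h5
  omega

lemma EE_cylAt {d n : ℕ} [NeZero n] (f₀ : CylFun d) (hfit : FitsCube d f₀.supp n)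
    (ρ : ℝ) (x : Torus d n) :
    EE ρ (fun η : Cfg d n => cylAt f₀ x η) = f₀.tilde ρ := by
  have hinj := theta_inj f₀ hfit x
  have hfun : (fun η : Cfg d n => cylAt f₀ x η)
      = fun η : Cfg d n => (fun σ : {z // z ∈ f₀.supp} → Bool =>
          f₀.toFun (fun z => if hz : z ∈ f₀.supp then σ ⟨z, hz⟩ else false))
          (fun a => η (x + toTorus a.1)) := by
    funext η
    apply f₀.cyl
    intro z hz
    simp [liftCfg, shiftCfg, hz]
  rw [hfun]
  exact (push ρ _ hinj (fun σ : {z // z ∈ f₀.supp} → Bool =>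
    f₀.toFun (fun z => if hz : z ∈ f₀.supp then σ ⟨z, hz⟩ else false))).trans rfl

end ExpSq

namespace ExpSq

lemma EE_affine {ι : Type*} [Fintype ι] [DecidableEq ι] (ρ b c : ℝ) (g : (ι → Bool) → ℝ) :
    EE ρ (fun η => (g η - b) * c) = (EE ρ g - b) * c := by
  have h : ∀ η : ι → Bool, PP ρ η * ((g η - b) * c)
      = (PP ρ η * g η) * c - PP ρ η * (b * c) := fun η => by ring
  rw [EE, Finset.sum_congr rfl fun η _ => h η, Finset.sum_sub_distrib,
    ← Finset.sum_mul, ← Finset.sum_mul, sum_PP, EE]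
  ring

lemma fact_two_mul_le (k : ℕ) : (2 * k).factorial ≤ 4 ^ k * k.factorial ^ 2 := by
  induction k with
  | zero => simp
  | succ k ih =>
      have h1 : 2 * (k + 1) = (2 * k + 1) + 1 := by ring
      rw [h1, Nat.factorial_succ, Nat.factorial_succ, Nat.factorial_succ]
      have h2 : (2 * k + 1) * (2 * k).factorial ≤ (2 * k + 2) * (4 ^ k * k.factorial ^ 2) :=
        Nat.mul_le_mul (by omega) ih
      calc (2 * k + 1 + 1) * ((2 * k + 1) * (2 * k).factorial)
          ≤ (2 * k + 2) * ((2 * k + 2) * (4 ^ k * k.factorial ^ 2)) := by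
            have := Nat.mul_le_mul_left (2 * k + 1 + 1) h2
            simpa [show 2 * k + 1 + 1 = 2 * k + 2 by omega] using this
        _ = 4 ^ (k + 1) * ((k + 1) * k.factorial) ^ 2 := by ring

lemma pow_div_factorial_le_exp {u : ℝ} (hu : 0 ≤ u) (m : ℕ) :
    u ^ m / m.factorial ≤ Real.exp u := by
  have h1 : u ^ m / m.factorial ≤ ∑ i ∈ Finset.range (m + 1), u ^ i / i.factorial :=
    Finset.single_le_sum (f := fun i => u ^ i / (i.factorial : ℝ))
      (fun i _ => div_nonneg (pow_nonneg hu i) (Nat.cast_nonneg _))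
      (Finset.self_mem_range_succ m)
  exact h1.trans (Real.sum_le_exp_of_nonneg hu _)

lemma exp_eq_tsum (x : ℝ) : Real.exp x = ∑' k : ℕ, x ^ k / k.factorial := by
  rw [Real.exp_eq_exp_ℝ, NormedSpace.exp_eq_tsum_div]

lemma alg_bound (m : ℕ) (hm : 0 < m) (a k2 e : ℝ) (ha : 0 ≤ a) (hk2 : 0 ≤ k2) (he : 0 ≤ e) :
    (a ^ m / m.factorial) * (2 * (2 * m).factorial * (k2 / m) ^ m * e ^ m)
      ≤ 2 * (4 * e * (a * k2)) ^ m := by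
  have hm0 : (0:ℝ) < m := by exact_mod_cast hm
  have hfm : (0:ℝ) < (m.factorial : ℝ) := by exact_mod_cast m.factorial_pos
  have hfact2 : ((2 * m).factorial : ℝ) ≤ 4 ^ m * (m.factorial : ℝ) * (m : ℝ) ^ m := by
    have hA := fact_two_mul_le m
    have hB : m.factorial ≤ m ^ m := Nat.factorial_le_pow m
    have hC : (2 * m).factorial ≤ 4 ^ m * (m.factorial * m ^ m) := by
      refine hA.trans ?_
      have h1 := Nat.mul_le_mul_left m.factorial hB
      calc 4 ^ m * m.factorial ^ 2 = 4 ^ m * (m.factorial * m.factorial) := by ring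
        _ ≤ 4 ^ m * (m.factorial * m ^ m) := Nat.mul_le_mul_left _ h1
    calc ((2 * m).factorial : ℝ) ≤ ((4 ^ m * (m.factorial * m ^ m) : ℕ) : ℝ) := by
          exact_mod_cast hC
      _ = 4 ^ m * (m.factorial : ℝ) * (m : ℝ) ^ m := by push_cast; ring
  have hmm : ((m : ℝ)) ^ m * (k2 / m) ^ m = k2 ^ m := by
    rw [← mul_pow, mul_div_cancel₀ _ hm0.ne']
  calc (a ^ m / m.factorial) * (2 * (2 * m).factorial * (k2 / m) ^ m * e ^ m)
      ≤ (a ^ m / m.factorial) *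
        (2 * (4 ^ m * (m.factorial : ℝ) * (m : ℝ) ^ m) * (k2 / m) ^ m * e ^ m) := by
        refine mul_le_mul_of_nonneg_left ?_ (by positivity)
        refine mul_le_mul_of_nonneg_right ?_ (by positivity)
        refine mul_le_mul_of_nonneg_right ?_ (by positivity)
        exact mul_le_mul_of_nonneg_left hfact2 (by norm_num)
    _ = 2 * (4 ^ m * a ^ m * e ^ m * ((m : ℝ) ^ m * (k2 / m) ^ m)) *
          ((m.factorial : ℝ) / m.factorial) := by ring
    _ = 2 * (4 * e * (a * k2)) ^ m := by
        rw [hmm, div_self hfm.ne', mul_one, mul_pow, mul_pow, mul_pow]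
        ring

end ExpSq

open ExpSq

/-- exponential moment bound (Corollary l27):
`log E_{ν^n_ρ}[exp(a (n^{-d/2} Σ_x (f₀(τ_x η) - ~f₀(ρ)) F_x)²)] ≤ C₀ a ‖F‖²_∞`
for `0 < a < c₀/‖F‖²_∞`, with constants `0 < c₀ < C₀ < ∞` depending only on `f₀`. -/
theorem exp_square_moment_bound :
    ∀ (d : ℕ) (f₀ : CylFun d),
    ∃ c₀ C₀ : ℝ, 0 < c₀ ∧ c₀ < C₀ ∧
      ∀ (n : ℕ) [NeZero n], ∀ ρ : ℝ, 0 < ρ → ρ < 1 →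
        FitsCube d f₀.supp n →
        ∀ F : Torus d n → ℝ, ∀ a : ℝ, 0 < a → a < c₀ / supNorm F ^ 2 →
          Real.log (expect d n ρ (fun η => Real.exp (a *
            ((Real.sqrt ((n : ℝ) ^ d))⁻¹ *
              ∑ x : Torus d n, (cylAt f₀ x η - f₀.tilde ρ) * F x) ^ 2)))
            ≤ C₀ * a * supNorm F ^ 2 := by
  intro d f₀
  set Mc := ExpSq.Mconst f₀ with hMc
  set s : ℝ := (f₀.supp.card : ℝ) with hs
  have hMc0 : 0 ≤ Mc := ExpSq.Mconst_nonneg f₀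
  have hs0 : 0 ≤ s := Nat.cast_nonneg _
  set Q : ℝ := (Mc + 1) ^ 2 * (s + 1) ^ 2 with hQ
  have hQ1 : 1 ≤ Q := by
    have h1 : 1 ≤ (Mc + 1) ^ 2 := by nlinarith
    have h2 : 1 ≤ (s + 1) ^ 2 := by nlinarith
    rw [hQ]
    nlinarith
  have hQ0 : 0 < Q := by linarith
  refine ⟨(100 * Q)⁻¹, 200 * Q, by positivity, ?_, ?_⟩
  · have h1 : (100 * Q)⁻¹ ≤ 1 := by
      rw [inv_le_one_iff₀]
      right
      linarith
    linarith
  intro n _ ρ hρ0 hρ1 hfit F a ha halt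
  set ν : ℝ := supNorm F with hν
  set K : ℝ := 2 * (Mc + 1) * (s + 1) with hK
  have hK0 : 0 < K := by rw [hK]; nlinarith only [hMc0, hs0]
  have hKQ : K ^ 2 = 4 * Q := by rw [hK, hQ]; ring
  have hFx : ∀ x : Torus d n, |F x| ≤ ν := by
    intro x
    rw [hν, supNorm]
    exact le_ciSup (f := fun x : Torus d n => |F x|)
      (Set.Finite.bddAbove (Set.finite_range _)) x
  have hF0 : 0 ≤ ν := (abs_nonneg _).trans (hFx (Classical.arbitrary _))
  rcases eq_or_lt_of_le hF0 with hF | hF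
  · exfalso
    rw [← hF] at halt
    norm_num at halt
    linarith
  set N : ℝ := (n : ℝ) ^ d with hN
  have hn1 : 1 ≤ (n : ℝ) := by
    have := Nat.one_le_iff_ne_zero.2 (NeZero.ne n)
    exact_mod_cast this
  have hN0 : 0 < N := by rw [hN]; positivity
  set r : ℝ := (Real.sqrt N)⁻¹ with hr
  have hr0 : 0 < r := by
    rw [hr]
    exact inv_pos.2 (Real.sqrt_pos.2 hN0)
  have hr2 : r ^ 2 = N⁻¹ := by rw [hr, inv_pow, Real.sq_sqrt hN0.le]
  set t₀ : ℝ := f₀.tilde ρ with ht₀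
  set X : Cfg d n → ℝ := fun η => r * ∑ x : Torus d n, (cylAt f₀ x η - t₀) * F x with hX
  set κ : ℝ := K * ν with hκ
  have hκ0 : 0 < κ := mul_pos hK0 hF
  have hcard : (Fintype.card (Torus d n) : ℝ) = N := by
    have h1 : Fintype.card (Torus d n) = n ^ d := by
      simp [Fintype.card_fun, ZMod.card]
    rw [h1, hN]
    push_cast
    ring
  have hEcyl : ∀ x : Torus d n, ExpSq.EE ρ (fun η : Cfg d n => cylAt f₀ x η) = t₀ :=
    fun x => ExpSq.EE_cylAt f₀ hfit ρ x
  have hEX : ExpSq.EE ρ X = 0 := by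
    have h1 : ExpSq.EE ρ X = r * ∑ x : Torus d n,
        ExpSq.EE ρ (fun η : Cfg d n => (cylAt f₀ x η - t₀) * F x) := by
      rw [hX, ExpSq.EE_smul, ExpSq.EE_sum]
    have h2 : ∀ x : Torus d n,
        ExpSq.EE ρ (fun η : Cfg d n => (cylAt f₀ x η - t₀) * F x) = 0 :=
      fun x => by rw [ExpSq.EE_affine, hEcyl x, sub_self, zero_mul]
    rw [h1, Finset.sum_congr rfl fun x _ => h2 x, Finset.sum_const, smul_zero, mul_zero]
  have hMb : ∀ (x : Torus d n) (η₁ η₀ : Cfg d n),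
      |cylAt f₀ x η₁ - cylAt f₀ x η₀| ≤ 2 * Mc := by
    intro x η₁ η₀
    have h1 := ExpSq.abs_cylAt_le f₀ x η₁
    have h2 := ExpSq.abs_cylAt_le f₀ x η₀
    calc |cylAt f₀ x η₁ - cylAt f₀ x η₀| ≤ |cylAt f₀ x η₁| + |cylAt f₀ x η₀| := abs_sub _ _
      _ ≤ 2 * Mc := by rw [hMc]; linarith
  have hdiff : ∀ (y : Torus d n) (η : Cfg d n),
      |X (Function.update η y true) - X (Function.update η y false)| ≤ r * κ := by
    intro y η
    set η₁ := Function.update η y true with hη₁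
    set η₀ := Function.update η y false with hη₀
    set T : Finset (Torus d n) := f₀.supp.image (fun z => y - toTorus z) with hT
    have hvan : ∀ x : Torus d n, x ∉ T → cylAt f₀ x η₁ = cylAt f₀ x η₀ := by
      intro x hx
      apply f₀.cyl
      intro z hz
      show η₁ (x + toTorus z) = η₀ (x + toTorus z)
      have hne : x + toTorus z ≠ y := by
        intro he
        exact hx (Finset.mem_image.2 ⟨z, hz, by rw [← he, add_sub_cancel_right]⟩)
      rw [hη₁, hη₀, Function.update_of_ne hne, Function.update_of_ne hne]
    have hsub : X η₁ - X η₀ = r * ∑ x ∈ T, (cylAt f₀ x η₁ - cylAt f₀ x η₀) * F x := by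
      rw [hX]
      simp only
      rw [← mul_sub, ← Finset.sum_sub_distrib]
      congr 1
      rw [Finset.sum_congr rfl fun x _ => show (cylAt f₀ x η₁ - t₀) * F x
          - (cylAt f₀ x η₀ - t₀) * F x = (cylAt f₀ x η₁ - cylAt f₀ x η₀) * F x from by ring]
      exact (Finset.sum_subset (Finset.subset_univ T)
        (fun x _ hx => by rw [hvan x hx]; ring)).symm
    have hbound : |∑ x ∈ T, (cylAt f₀ x η₁ - cylAt f₀ x η₀) * F x| ≤ κ := by
      refine (Finset.abs_sum_le_sum_abs _ _).trans ?_
      have hterm : ∀ x ∈ T, |(cylAt f₀ x η₁ - cylAt f₀ x η₀) * F x| ≤ 2 * Mc * ν := by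
        intro x _
        rw [abs_mul]
        exact mul_le_mul (hMb x η₁ η₀) (hFx x) (abs_nonneg _) (by linarith)
      refine (Finset.sum_le_sum hterm).trans ?_
      rw [Finset.sum_const, nsmul_eq_mul]
      have hcardT : (T.card : ℝ) ≤ s := by
        rw [hs, hT]
        exact_mod_cast Finset.card_image_le
      calc (T.card : ℝ) * (2 * Mc * ν) ≤ s * (2 * Mc * ν) :=
            mul_le_mul_of_nonneg_right hcardT (by positivity)
        _ ≤ κ := by rw [hκ, hK]; nlinarith only [hMc0, hs0, hF0]
    calc |X η₁ - X η₀| = r * |∑ x ∈ T, (cylAt f₀ x η₁ - cylAt f₀ x η₀) * F x| := by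
          rw [hsub, abs_mul, abs_of_nonneg hr0.le]
      _ ≤ r * κ := mul_le_mul_of_nonneg_left hbound hr0.le
  have hMGF : ∀ t : ℝ, ExpSq.EE ρ (fun η : Cfg d n => Real.exp (t * X η))
      ≤ Real.exp (t ^ 2 * κ ^ 2) := by
    intro t
    have htens := ExpSq.tensor hρ0.le hρ1.le Finset.univ (fun η : Cfg d n => t * X η)
      (fun _ => |t| * (r * κ))
      (fun η ζ h => by rw [show η = ζ from funext fun i => h i (Finset.mem_univ i)])
      (fun y _ η => by
        rw [show t * X (Function.update η y true) - t * X (Function.update η y false)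
          = t * (X (Function.update η y true) - X (Function.update η y false)) from by ring,
          abs_mul]
        exact mul_le_mul_of_nonneg_left (hdiff y η) (abs_nonneg t))
    refine htens.trans ?_
    have h1 : ExpSq.EE ρ (fun η : Cfg d n => t * X η) = 0 := by
      rw [ExpSq.EE_smul, hEX, mul_zero]
    rw [h1, Real.exp_zero, one_mul, Finset.sum_const, nsmul_eq_mul, Finset.card_univ]
    have h2 : (Fintype.card (Torus d n) : ℝ) * (|t| * (r * κ)) ^ 2 = t ^ 2 * κ ^ 2 := by
      rw [hcard, mul_pow, mul_pow, sq_abs, hr2]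
      field_simp
    rw [h2]
  have hmom : ∀ k : ℕ, 0 < k → ExpSq.EE ρ (fun η : Cfg d n => X η ^ (2 * k))
      ≤ 2 * (2 * k).factorial * (κ ^ 2 / k) ^ k * Real.exp k := by
    intro k hk
    have hk0 : (0:ℝ) < k := by exact_mod_cast hk
    set t : ℝ := Real.sqrt k / κ with htdef
    have ht0 : 0 < t := div_pos (Real.sqrt_pos.2 hk0) hκ0
    have ht2 : t ^ 2 = k / κ ^ 2 := by rw [htdef, div_pow, Real.sq_sqrt hk0.le]
    have htk : t ^ (2 * k) = (k / κ ^ 2) ^ k := by rw [pow_mul, ht2]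
    have htkpos : (0:ℝ) < t ^ (2 * k) := pow_pos ht0 _
    have hCpos : (0:ℝ) ≤ ((2 * k).factorial : ℝ) / t ^ (2 * k) := by positivity
    have hptw : ∀ η : Cfg d n, X η ^ (2 * k) ≤ ((2 * k).factorial / t ^ (2 * k)) *
        (Real.exp (t * X η) + Real.exp (-t * X η)) := by
      intro η
      have h1 : (t * |X η|) ^ (2 * k) / (2 * k).factorial ≤ Real.exp (t * |X η|) :=
        ExpSq.pow_div_factorial_le_exp (by positivity) _
      have h2 : Real.exp (t * |X η|) ≤ Real.exp (t * X η) + Real.exp (-t * X η) := by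
        rcases le_or_gt 0 (X η) with h | h
        · rw [abs_of_nonneg h]
          have := (Real.exp_pos (-t * X η)).le
          linarith
        · rw [abs_of_neg h, show t * -X η = -t * X η from by ring]
          have := (Real.exp_pos (t * X η)).le
          linarith
      have hXk : |X η| ^ (2 * k) = X η ^ (2 * k) := by
        rw [← abs_pow, abs_of_nonneg (by rw [pow_mul]; positivity)]
      have h3 : t ^ (2 * k) * X η ^ (2 * k) ≤ (2 * k).factorial * Real.exp (t * |X η|) := by
        have h4 := (div_le_iff₀ (by positivity : (0:ℝ) < ((2 * k).factorial : ℝ))).1 h1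
        calc t ^ (2 * k) * X η ^ (2 * k) = t ^ (2 * k) * |X η| ^ (2 * k) := by
              rw [hXk]
          _ = (t * |X η|) ^ (2 * k) := (mul_pow _ _ _).symm
          _ ≤ Real.exp (t * |X η|) * (2 * k).factorial := h4
          _ = (2 * k).factorial * Real.exp (t * |X η|) := by ring
      calc X η ^ (2 * k) = (t ^ (2 * k) * X η ^ (2 * k)) / t ^ (2 * k) := by
            field_simp
        _ ≤ ((2 * k).factorial * Real.exp (t * |X η|)) / t ^ (2 * k) :=
            (div_le_div_iff_of_pos_right htkpos).2 h3
        _ = ((2 * k).factorial / t ^ (2 * k)) * Real.exp (t * |X η|) := by ring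
        _ ≤ ((2 * k).factorial / t ^ (2 * k)) *
            (Real.exp (t * X η) + Real.exp (-t * X η)) :=
            mul_le_mul_of_nonneg_left h2 hCpos
    have hE1 : ExpSq.EE ρ (fun η : Cfg d n => X η ^ (2 * k))
        ≤ ((2 * k).factorial / t ^ (2 * k)) * (2 * Real.exp (t ^ 2 * κ ^ 2)) := by
      refine (ExpSq.EE_mono hρ0.le hρ1.le hptw).trans ?_
      rw [show (fun η : Cfg d n => ((2 * k).factorial / t ^ (2 * k)) *
          (Real.exp (t * X η) + Real.exp (-t * X η)))
        = fun η : Cfg d n => ((2 * k).factorial / t ^ (2 * k)) *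
          ((fun η => Real.exp (t * X η)) η + (fun η => Real.exp (-t * X η)) η) from rfl,
        ExpSq.EE_smul, ExpSq.EE_add]
      refine mul_le_mul_of_nonneg_left ?_ hCpos
      have hp := hMGF t
      have hm := hMGF (-t)
      rw [show (-t) ^ 2 = t ^ 2 from by ring] at hm
      have : (fun η : Cfg d n => Real.exp (-t * X η)) = fun η => Real.exp ((-t) * X η) := rfl
      rw [this]
      linarith
    have ht2κ : t ^ 2 * κ ^ 2 = k := by
      rw [ht2, div_mul_cancel₀ _ (by positivity : (κ:ℝ) ^ 2 ≠ 0)]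
    have hCval : ((2 * k).factorial : ℝ) / t ^ (2 * k) = (2 * k).factorial * (κ ^ 2 / k) ^ k := by
      rw [htk, div_eq_mul_inv, ← inv_pow, inv_div]
    refine hE1.trans (le_of_eq ?_)
    rw [ht2κ, hCval]
    ring
  -- the series expansion
  set c : ℕ → ℝ := fun k => (a ^ k / k.factorial) *
    ExpSq.EE ρ (fun η : Cfg d n => X η ^ (2 * k)) with hcdef
  have hceq : ∀ k : ℕ, c k = ∑ η : Cfg d n, ExpSq.PP ρ η * ((a * X η ^ 2) ^ k / k.factorial) := by
    intro k
    rw [hcdef]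
    simp only
    rw [ExpSq.EE, Finset.mul_sum]
    refine Finset.sum_congr rfl fun η _ => ?_
    rw [show (a * X η ^ 2) ^ k / k.factorial = a ^ k / k.factorial * X η ^ (2 * k) from by
      rw [mul_pow, pow_mul]; ring]
    ring
  have hcsum : Summable c := by
    rw [show c = fun k => ∑ η : Cfg d n, ExpSq.PP ρ η * ((a * X η ^ 2) ^ k / k.factorial)
      from funext hceq]
    exact summable_sum fun η _ => (Real.summable_pow_div_factorial _).mul_left _
  have hser : ExpSq.EE ρ (fun η : Cfg d n => Real.exp (a * X η ^ 2)) = ∑' k : ℕ, c k := by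
    rw [ExpSq.EE]
    calc ∑ η : Cfg d n, ExpSq.PP ρ η * Real.exp (a * X η ^ 2)
        = ∑ η : Cfg d n, ∑' k : ℕ, ExpSq.PP ρ η * ((a * X η ^ 2) ^ k / k.factorial) := by
          refine Finset.sum_congr rfl fun η _ => ?_
          rw [ExpSq.exp_eq_tsum (a * X η ^ 2), ← tsum_mul_left]
      _ = ∑' k : ℕ, ∑ η : Cfg d n, ExpSq.PP ρ η * ((a * X η ^ 2) ^ k / k.factorial) :=
          (Summable.tsum_finsetSum fun η _ => (Real.summable_pow_div_factorial _).mul_left _).symm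
      _ = ∑' k : ℕ, c k := tsum_congr fun k => (hceq k).symm
  have hc0 : c 0 = 1 := by
    rw [hcdef]
    simp only [pow_zero, Nat.factorial_zero, Nat.cast_one, div_one, one_mul, mul_zero]
    exact ExpSq.EE_const ρ 1
  have hcnn : ∀ k : ℕ, 0 ≤ c k := by
    intro k
    rw [hcdef]
    refine mul_nonneg (by positivity) ?_
    exact ExpSq.EE_nonneg hρ0.le hρ1.le fun η => by rw [pow_mul]; positivity
  -- the geometric bound
  set e1 : ℝ := Real.exp 1 with he1def
  have he1pos : 0 < e1 := Real.exp_pos 1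
  have he3 : e1 < 3 := by
    have := Real.exp_one_lt_d9
    rw [he1def]
    linarith
  set β : ℝ := 4 * e1 * (a * κ ^ 2) with hβ
  have hβ0 : 0 < β := by positivity
  have haν : a * ν ^ 2 < (100 * Q)⁻¹ := (lt_div_iff₀ (by positivity)).1 halt
  have hβhalf : β ≤ 1 / 2 := by
    have hκν : κ ^ 2 = 4 * Q * ν ^ 2 := by rw [hκ, mul_pow, hKQ]
    have h1 : a * κ ^ 2 < 4 * Q * (100 * Q)⁻¹ := by
      calc a * κ ^ 2 = 4 * Q * (a * ν ^ 2) := by rw [hκν]; ring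
        _ < 4 * Q * (100 * Q)⁻¹ := by
            exact mul_lt_mul_of_pos_left haν (by positivity)
    have h2 : 4 * Q * (100 * Q)⁻¹ = 1 / 25 := by
      field_simp
      ring
    have h3 : a * κ ^ 2 < 1 / 25 := by rw [h2] at h1; exact h1
    have h4 : 0 < a * κ ^ 2 := by positivity
    rw [hβ]
    nlinarith only [h3, h4, he3, he1pos]
  have hβ1 : β < 1 := by linarith
  have hck : ∀ k : ℕ, c (k + 1) ≤ 2 * β ^ (k + 1) := by
    intro k
    set m : ℕ := k + 1 with hm
    have hmpos : 0 < m := Nat.succ_pos k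
    have hm0 : (0:ℝ) < m := by exact_mod_cast hmpos
    have hfm : (0:ℝ) < (m.factorial : ℝ) := by exact_mod_cast m.factorial_pos
    have h1 := hmom m hmpos
    have h2 : c m ≤ (a ^ m / m.factorial) *
        (2 * (2 * m).factorial * (κ ^ 2 / m) ^ m * Real.exp m) := by
      rw [hcdef]
      exact mul_le_mul_of_nonneg_left h1 (by positivity)
    refine h2.trans ?_
    have hexp : Real.exp (m : ℝ) = e1 ^ m := by
      rw [he1def, ← Real.exp_nat_mul, mul_one]
    have halg := ExpSq.alg_bound m hmpos a (κ ^ 2) e1 ha.le (by positivity) he1pos.le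
    calc (a ^ m / m.factorial) * (2 * (2 * m).factorial * (κ ^ 2 / m) ^ m * Real.exp m)
        = (a ^ m / m.factorial) * (2 * (2 * m).factorial * (κ ^ 2 / m) ^ m * e1 ^ m) := by
          rw [hexp]
      _ ≤ 2 * (4 * e1 * (a * κ ^ 2)) ^ m := halg
      _ = 2 * β ^ m := by rw [hβ]
  have hsumc1 : Summable (fun k : ℕ => c (k + 1)) := (summable_nat_add_iff 1).2 hcsum
  have hsumg : Summable (fun k : ℕ => 2 * β ^ (k + 1)) := by
    rw [show (fun k : ℕ => 2 * β ^ (k + 1)) = fun k : ℕ => (2 * β) * β ^ k from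
      funext fun k => by ring]
    exact (summable_geometric_of_lt_one hβ0.le hβ1).mul_left _
  have htail : ∑' k : ℕ, c (k + 1) ≤ 2 * β * (1 - β)⁻¹ := by
    refine (Summable.tsum_le_tsum hck hsumc1 hsumg).trans ?_
    have h1 : ∑' k : ℕ, 2 * β ^ (k + 1) = (2 * β) * ∑' k : ℕ, β ^ k := by
      rw [← tsum_mul_left]
      exact tsum_congr fun k => by ring
    rw [h1, tsum_geometric_of_lt_one hβ0.le hβ1]
  have htail0 : 0 ≤ ∑' k : ℕ, c (k + 1) := tsum_nonneg fun k => hcnn (k + 1)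
  have hEeq : ExpSq.EE ρ (fun η : Cfg d n => Real.exp (a * X η ^ 2))
      = 1 + ∑' k : ℕ, c (k + 1) := by
    rw [hser, Summable.tsum_eq_zero_add hcsum, hc0]
  have hinv : (1 - β)⁻¹ ≤ 2 := by
    have h12 : (1:ℝ) / 2 ≤ 1 - β := by linarith
    calc (1 - β)⁻¹ ≤ ((1:ℝ) / 2)⁻¹ := by
          exact inv_anti₀ (by norm_num) h12
      _ = 2 := by norm_num
  have hEb : ExpSq.EE ρ (fun η : Cfg d n => Real.exp (a * X η ^ 2)) ≤ 1 + 4 * β := by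
    rw [hEeq]
    have h1 : 2 * β * (1 - β)⁻¹ ≤ 2 * β * 2 := mul_le_mul_of_nonneg_left hinv (by positivity)
    linarith only [htail, h1]
  have hE1 : (1:ℝ) ≤ ExpSq.EE ρ (fun η : Cfg d n => Real.exp (a * X η ^ 2)) := by
    rw [hEeq]; linarith
  -- conclusion
  rw [ExpSq.expect_eq]
  have hgoalfun : (fun η : Cfg d n => Real.exp (a *
      (r * ∑ x : Torus d n, (cylAt f₀ x η - t₀) * F x) ^ 2))
      = fun η : Cfg d n => Real.exp (a * X η ^ 2) := rfl
  rw [hgoalfun]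
  have hlog : Real.log (ExpSq.EE ρ (fun η : Cfg d n => Real.exp (a * X η ^ 2))) ≤ 4 * β :=
    calc Real.log (ExpSq.EE ρ (fun η : Cfg d n => Real.exp (a * X η ^ 2)))
        ≤ Real.log (1 + 4 * β) := Real.log_le_log (by linarith) hEb
      _ ≤ (1 + 4 * β) - 1 := Real.log_le_sub_one_of_pos (by linarith)
      _ = 4 * β := by ring
  refine hlog.trans ?_
  have hβval : 4 * β = 64 * e1 * (Q * (a * ν ^ 2)) := by
    rw [hβ, hκ, mul_pow, hKQ]
    ring
  rw [hβval]
  have hpos : 0 ≤ Q * (a * ν ^ 2) := by positivity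
  calc 64 * e1 * (Q * (a * ν ^ 2)) ≤ 64 * 3 * (Q * (a * ν ^ 2)) := by
        exact mul_le_mul_of_nonneg_right (by linarith) hpos
    _ ≤ 200 * Q * a * ν ^ 2 := by nlinarith only [hpos]
end
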